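/- arXiv:1412.2374 — 8 statements merged into one kernel-verified Lean document; each statement's English description precedes it below -/
import Mathlib

section
/- If H is a generalized Halin graph of order n, then H contains a cycle of length at least n/2. -/
/-- A generalized Halin graph `H = T ∪ C`: `T` is a spanning tree of `H` with no vertex of
degree 2 (a HIST) and `C` is a cycle on the set of leaves of `T`, edge-disjoint from `T`,
and together they account for all edges of `H`. -/
def IsGenHalin {V : Type*} [Fintype V] (H : SimpleGraph V) : Prop :=
  ∃ T : SimpleGraph V, T ≤ H ∧ T.IsTree ∧ (∀ v : V, (T.neighborSet v).ncard ≠ 2) ∧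
    ∃ (v : V) (c : H.Walk v v), c.IsCycle ∧
      (∀ u : V, u ∈ c.support ↔ (T.neighborSet u).ncard = 1) ∧
      (∀ e ∈ c.edges, e ∉ T.edgeSet) ∧
      H.edgeSet = T.edgeSet ∪ {e | e ∈ c.edges}

/-- A generalized Halin graph of order `n` contains a cycle of length at least `n/2`. -/
theorem stmt_1 {V : Type*} [Fintype V] (H : SimpleGraph V) (hH : IsGenHalin H) :
    ∃ (v : V) (c : H.Walk v v), c.IsCycle ∧ Fintype.card V ≤ 2 * c.length := by
  classical
  obtain ⟨T, hTH, hTree, hdeg2, v, c, hcyc, hsupp, -, -⟩ := hH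
  refine ⟨v, c, hcyc, ?_⟩
  -- degrees vs ncard
  have hncard : ∀ u : V, (T.neighborSet u).ncard = T.degree u := by
    intro u
    rw [Set.ncard_eq_toFinset_card']
    rfl
  -- the leaf set
  set L : Finset V := Finset.univ.filter (fun u => T.degree u = 1) with hL
  -- the cycle support equals L as a finset
  have hsuppL : c.support.toFinset = L := by
    ext u
    simp only [List.mem_toFinset, hL, Finset.mem_filter, Finset.mem_univ, true_and]
    rw [hsupp u, hncard u]
  -- card of cycle support = length
  have hvlast : v ∈ c.support.tail := by
    have hne : ¬ c.Nil := hcyc.not_nil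
    cases c with
    | nil => simp at hne
    | cons h p =>
      simp only [SimpleGraph.Walk.support_cons, List.tail_cons]
      exact SimpleGraph.Walk.end_mem_support p
  have hlen : c.support.toFinset.card = c.length := by
    have h1 : c.support.toFinset = c.support.tail.toFinset := by
      conv_lhs => rw [c.support_eq_cons]
      rw [List.toFinset_cons, Finset.insert_eq_self.2 (List.mem_toFinset.2 hvlast)]
    rw [h1, List.toFinset_card_of_nodup hcyc.support_nodup]
    have := c.length_support
    have := List.length_tail (l := c.support)
    omega
  -- so L.card = c.length
  have hLcard : L.card = c.length := by rw [← hsuppL, hlen]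
  -- card V ≥ 3 from the cycle
  have hV3 : 3 ≤ Fintype.card V := by
    have h3 := hcyc.three_le_length
    have := (hcyc.support_nodup).length_le_card
    have := c.length_support
    have := List.length_tail (l := c.support)
    omega
  -- every vertex has positive degree in T
  have hpos : ∀ u : V, 0 < T.degree u := by
    intro u
    rw [SimpleGraph.degree_pos_iff_exists_adj]
    obtain ⟨w, hw⟩ : ∃ w : V, w ≠ u := by
      have : 1 < Fintype.card V := by omega
      exact Fintype.exists_ne_of_one_lt_card this u
    obtain ⟨p⟩ := hTree.isConnected.preconnected u w
    cases p with
    | nil => exact absurd rfl hw.symm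
    | cons h p => exact ⟨_, h⟩
  -- non-leaves have degree ≥ 3
  have hbig : ∀ u : V, u ∉ L → 3 ≤ T.degree u := by
    intro u hu
    simp only [hL, Finset.mem_filter, Finset.mem_univ, true_and] at hu
    have h2 := hdeg2 u
    rw [hncard u] at h2
    have := hpos u
    omega
  -- degree sum formula
  have hsum : ∑ u : V, T.degree u = 2 * T.edgeFinset.card :=
    T.sum_degrees_eq_twice_card_edges
  have hedges : T.edgeFinset.card + 1 = Fintype.card V := hTree.card_edgeFinset
  -- split the sum
  have hsplit : ∑ u : V, T.degree u =
      (∑ u ∈ L, T.degree u) + ∑ u ∈ Lᶜ, T.degree u := by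
    rw [Finset.sum_add_sum_compl]
  have hLsum : ∑ u ∈ L, T.degree u = L.card := by
    rw [Finset.sum_congr rfl (fun u hu => by
      simp only [hL, Finset.mem_filter] at hu; exact hu.2)]
    simp
  have hCsum : 3 * Lᶜ.card ≤ ∑ u ∈ Lᶜ, T.degree u := by
    calc 3 * Lᶜ.card = ∑ _u ∈ Lᶜ, 3 := by rw [Finset.sum_const]; ring
      _ ≤ ∑ u ∈ Lᶜ, T.degree u :=
        Finset.sum_le_sum (fun u hu => hbig u (Finset.mem_compl.1 hu))
  have hcompl : Lᶜ.card = Fintype.card V - L.card := by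
    rw [Finset.card_compl]
  have hLle : L.card ≤ Fintype.card V := L.card_le_univ
  omega
end

section
/- For odd a ≥ 1, the complete bipartite graph K_{a,b} with b = (3a-1)/2 has minimum degree (2n+1)/5, where n = a + b, and contains no spanning generalized Halin graph. -/
open SimpleGraph Finset

/-- Alternation in a bipartite graph: walks alternate sides. -/
lemma alt_walk_aux {A B : Type*} {G : SimpleGraph (A ⊕ B)}
    (hG : G ≤ completeBipartiteGraph A B) {x y : A ⊕ B} (p : G.Walk x y) :
    2 * p.support.countP (fun z => z.isLeft) + 1 =
      p.support.length + (if x.isLeft then 1 else 0) + (if y.isLeft then 1 else 0) := by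
  induction p with
  | nil => simp [List.countP_cons]; split <;> simp
  | @cons u w y h q ih =>
    have hadj : (completeBipartiteGraph A B).Adj u w := hG h
    simp only [completeBipartiteGraph_adj] at hadj
    simp only [SimpleGraph.Walk.support_cons, List.countP_cons, List.length_cons]
    cases u <;> cases w <;> simp_all <;> omega

/-- Alternation in a bipartite graph: right-side count version. -/
lemma alt_walk_aux' {A B : Type*} {G : SimpleGraph (A ⊕ B)}
    (hG : G ≤ completeBipartiteGraph A B) {x y : A ⊕ B} (p : G.Walk x y) :
    2 * p.support.countP (fun z => z.isRight) + 1 =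
      p.support.length + (if x.isRight then 1 else 0) + (if y.isRight then 1 else 0) := by
  induction p with
  | nil => simp [List.countP_cons]; split <;> simp
  | @cons u w y h q ih =>
    have hadj : (completeBipartiteGraph A B).Adj u w := hG h
    simp only [completeBipartiteGraph_adj] at hadj
    simp only [SimpleGraph.Walk.support_cons, List.countP_cons, List.length_cons]
    cases u <;> cases w <;> simp_all <;> omega

/-- For odd `a ≥ 1` and `b = (3a-1)/2` (i.e. `2b = 3a - 1`), the complete bipartite graph
`K_{a,b}` has minimum degree `(2n+1)/5` where `n = a + b` (i.e. `5δ = 2n + 1`), and it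
contains no spanning generalized Halin graph. -/
theorem stmt_5 {A B : Type*} [Fintype A] [Fintype B]
    [DecidableRel (completeBipartiteGraph A B).Adj]
    (ha1 : 1 ≤ Fintype.card A) (haodd : Odd (Fintype.card A))
    (hb : 2 * Fintype.card B = 3 * Fintype.card A - 1) :
    5 * (completeBipartiteGraph A B).minDegree = 2 * Fintype.card (A ⊕ B) + 1 ∧
      ¬ ∃ H : SimpleGraph (A ⊕ B), H ≤ completeBipartiteGraph A B ∧ IsGenHalin H := by
  classical
  have hbpos : 1 ≤ Fintype.card B := by omega
  have hA : Nonempty A := Fintype.card_pos_iff.mp ha1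
  have hB : Nonempty B := Fintype.card_pos_iff.mp hbpos
  have degl : ∀ u : A, (completeBipartiteGraph A B).degree (Sum.inl u) = Fintype.card B := by
    intro u
    have h : (completeBipartiteGraph A B).neighborFinset (Sum.inl u)
        = Finset.univ.image Sum.inr := by
      ext z
      cases z <;> simp [mem_neighborFinset]
    rw [SimpleGraph.degree, h, Finset.card_image_of_injective _ Sum.inr_injective,
      Finset.card_univ]
  have degr : ∀ w : B, (completeBipartiteGraph A B).degree (Sum.inr w) = Fintype.card A := by
    intro w
    have h : (completeBipartiteGraph A B).neighborFinset (Sum.inr w)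
        = Finset.univ.image Sum.inl := by
      ext z
      cases z <;> simp [mem_neighborFinset]
    rw [SimpleGraph.degree, h, Finset.card_image_of_injective _ Sum.inl_injective,
      Finset.card_univ]
  have hmin : (completeBipartiteGraph A B).minDegree = Fintype.card A := by
    apply le_antisymm
    · obtain ⟨w⟩ := hB
      exact (minDegree_le_degree _ (Sum.inr w)).trans_eq (degr w)
    · apply le_minDegree_of_forall_le_degree
      intro v
      cases v with
      | inl u => rw [degl u]; omega
      | inr w => rw [degr w]
  constructor
  · rw [hmin, Fintype.card_sum]; omega
  rintro ⟨H, hHK, T, hTH, hT, hdeg2, v, c, hc, hsupp, -, -⟩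
  have hTK : T ≤ completeBipartiteGraph A B := le_trans hTH hHK
  -- ncard = degree
  have hdegncard : ∀ x, (T.neighborSet x).ncard = T.degree x := by
    intro x
    rw [Set.ncard_eq_toFinset_card', Set.toFinset_card]
    exact T.card_neighborSet_eq_degree x
  have hsupp' : ∀ u, u ∈ c.support ↔ T.degree u = 1 := by
    intro u; rw [hsupp u, hdegncard u]
  have hcardn : Fintype.card (A ⊕ B) = Fintype.card A + Fintype.card B := Fintype.card_sum
  -- degrees are positive
  have hdegpos : ∀ x, 1 ≤ T.degree x := by
    intro x
    obtain ⟨y, hy⟩ := Fintype.exists_ne_of_one_lt_card (by omega) x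
    obtain ⟨p⟩ := hT.isConnected.preconnected x y
    cases p with
    | nil => exact absurd rfl hy
    | cons h q =>
      rw [← T.card_neighborFinset_eq_degree]
      exact Finset.card_pos.mpr ⟨_, (T.mem_neighborFinset _ _).mpr h⟩
  have hdeg3 : ∀ x, T.degree x = 1 ∨ 3 ≤ T.degree x := by
    intro x
    have h1 := hdegpos x
    have h2 := hdeg2 x
    rw [hdegncard x] at h2
    omega
  -- edge count of the tree
  have hE : T.edgeFinset.card + 1 = Fintype.card (A ⊕ B) := hT.card_edgeFinset
  -- sums of degrees on each side
  have hsplit : (∑ u : A, T.degree (Sum.inl u)) + (∑ w : B, T.degree (Sum.inr w))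
      = 2 * T.edgeFinset.card := by
    rw [← T.sum_degrees_eq_twice_card_edges, Fintype.sum_sum_type]
  have hAeq : ∀ u : A, T.degree (Sum.inl u)
      = ∑ w : B, (if T.Adj (Sum.inl u) (Sum.inr w) then 1 else 0) := by
    intro u
    have h : T.neighborFinset (Sum.inl u)
        = (Finset.univ.filter (fun w : B => T.Adj (Sum.inl u) (Sum.inr w))).image Sum.inr := by
      ext z
      cases z with
      | inl u' =>
        simp only [mem_neighborFinset, Finset.mem_image, Finset.mem_filter, Finset.mem_univ,
          true_and]
        constructor
        · intro hadj; exact absurd (hTK hadj) (by simp)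
        · rintro ⟨w, -, h⟩; exact absurd h (by simp)
      | inr w =>
        simp [mem_neighborFinset, Sum.inr_injective.eq_iff]
    rw [SimpleGraph.degree, h, Finset.card_image_of_injective _ Sum.inr_injective,
      Finset.card_filter]
  have hBeq : ∀ w : B, T.degree (Sum.inr w)
      = ∑ u : A, (if T.Adj (Sum.inl u) (Sum.inr w) then 1 else 0) := by
    intro w
    have h : T.neighborFinset (Sum.inr w)
        = (Finset.univ.filter (fun u : A => T.Adj (Sum.inl u) (Sum.inr w))).image Sum.inl := by
      ext z
      cases z with
      | inr w' =>
        simp only [mem_neighborFinset, Finset.mem_image, Finset.mem_filter, Finset.mem_univ,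
          true_and]
        constructor
        · intro hadj; exact absurd (hTK hadj) (by simp)
        · rintro ⟨u, -, h⟩; exact absurd h (by simp)
      | inl u =>
        simp [mem_neighborFinset, Sum.inl_injective.eq_iff, adj_comm]
    rw [SimpleGraph.degree, h, Finset.card_image_of_injective _ Sum.inl_injective,
      Finset.card_filter]
  have hABsum : (∑ u : A, T.degree (Sum.inl u)) = ∑ w : B, T.degree (Sum.inr w) := by
    simp only [hAeq, hBeq]
    exact Finset.sum_comm
  have hsA : (∑ u : A, T.degree (Sum.inl u)) = T.edgeFinset.card := by omega
  have hsB : (∑ w : B, T.degree (Sum.inr w)) = T.edgeFinset.card := by omega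
  -- leaf counts
  set lA := (Finset.univ.filter (fun u : A => T.degree (Sum.inl u) = 1)).card with hlA
  set lB := (Finset.univ.filter (fun w : B => T.degree (Sum.inr w) = 1)).card with hlB
  have hAineq : 3 * Fintype.card A ≤ (∑ u : A, T.degree (Sum.inl u)) + 2 * lA := by
    have key : ∀ u : A, 3 ≤ T.degree (Sum.inl u)
        + 2 * (if T.degree (Sum.inl u) = 1 then 1 else 0) := by
      intro u
      rcases hdeg3 (Sum.inl u) with h | h <;> simp [h] <;> omega
    calc 3 * Fintype.card A = ∑ _u : A, 3 := by
          rw [Finset.sum_const, Finset.card_univ, smul_eq_mul, mul_comm]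
      _ ≤ ∑ u : A, (T.degree (Sum.inl u)
            + 2 * (if T.degree (Sum.inl u) = 1 then 1 else 0)) :=
          Finset.sum_le_sum fun u _ => key u
      _ = (∑ u : A, T.degree (Sum.inl u)) + 2 * lA := by
          rw [Finset.sum_add_distrib, ← Finset.mul_sum, hlA, Finset.card_filter]
  have hBineq : 3 * Fintype.card B ≤ (∑ w : B, T.degree (Sum.inr w)) + 2 * lB := by
    have key : ∀ w : B, 3 ≤ T.degree (Sum.inr w)
        + 2 * (if T.degree (Sum.inr w) = 1 then 1 else 0) := by
      intro w
      rcases hdeg3 (Sum.inr w) with h | h <;> simp [h] <;> omega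
    calc 3 * Fintype.card B = ∑ _w : B, 3 := by
          rw [Finset.sum_const, Finset.card_univ, smul_eq_mul, mul_comm]
      _ ≤ ∑ w : B, (T.degree (Sum.inr w)
            + 2 * (if T.degree (Sum.inr w) = 1 then 1 else 0)) :=
          Finset.sum_le_sum fun w _ => key w
      _ = (∑ w : B, T.degree (Sum.inr w)) + 2 * lB := by
          rw [Finset.sum_add_distrib, ← Finset.mul_sum, hlB, Finset.card_filter]
  -- the cycle: parity of its support
  have hlen3 : 3 ≤ c.length := hc.three_le_length
  have hnil : ¬ c.Nil := by
    intro h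
    rw [SimpleGraph.Walk.nil_iff_length_eq] at h
    omega
  have hcons : c.support = v :: c.support.tail := c.support_eq_cons
  have htaillen : c.support.tail.length = c.length := by
    have := c.length_support
    rw [hcons] at this
    simpa using this
  have hvtail : v ∈ c.support.tail := by
    cases c with
    | nil => simp at hnil
    | cons h q =>
      simp only [SimpleGraph.Walk.support_cons, List.tail_cons]
      exact q.end_mem_support
  have hmemtail : ∀ z, z ∈ c.support ↔ z ∈ c.support.tail := by
    intro z
    rw [hcons, List.mem_cons]
    constructor
    · rintro (rfl | h)
      · exact hvtail
      · exact h
    · exact Or.inr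
  have halt := alt_walk_aux hHK c
  have halt' := alt_walk_aux' hHK c
  have hcount : 2 * c.support.tail.countP (fun z => z.isLeft) = c.support.tail.length := by
    rw [hcons] at halt
    simp only [List.countP_cons, List.length_cons] at halt
    cases v <;> simp at halt <;> omega
  have hcountR : c.support.tail.countP (fun z => z.isRight) =
      c.support.tail.countP (fun z => z.isLeft) := by
    have h2 : 2 * c.support.tail.countP (fun z => z.isRight) = c.support.tail.length := by
      rw [hcons] at halt'
      simp only [List.countP_cons, List.length_cons] at halt'
      cases v <;> simp at halt' <;> omega
    omega
  -- lA equals the number of left vertices on the cycle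
  have hnodup : c.support.tail.Nodup := hc.support_nodup
  have listcard : ∀ (p : A ⊕ B → Bool), ((c.support.tail.filter p).toFinset).card
      = c.support.tail.countP p := by
    intro p
    rw [List.countP_eq_length_filter, List.card_toFinset,
      List.Nodup.dedup (hnodup.filter p)]
  have hcardL : lA = c.support.tail.countP (fun z => z.isLeft) := by
    rw [hlA, ← listcard]
    apply Finset.card_bij (fun (u : A) _ => (Sum.inl u : A ⊕ B))
    · intro u hu
      simp only [Finset.mem_filter, Finset.mem_univ, true_and] at hu
      rw [List.mem_toFinset, List.mem_filter]
      exact ⟨(hmemtail _).mp ((hsupp' _).mpr hu), rfl⟩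
    · intro u1 _ u2 _ h
      exact Sum.inl_injective h
    · intro z hz
      rw [List.mem_toFinset, List.mem_filter] at hz
      obtain ⟨hz1, hz2⟩ := hz
      obtain ⟨u, rfl⟩ := Sum.isLeft_iff.mp hz2
      refine ⟨u, ?_, rfl⟩
      simp only [Finset.mem_filter, Finset.mem_univ, true_and]
      exact (hsupp' _).mp ((hmemtail _).mpr hz1)
  have hcardR : lB = c.support.tail.countP (fun z => z.isRight) := by
    rw [hlB, ← listcard]
    apply Finset.card_bij (fun (w : B) _ => (Sum.inr w : A ⊕ B))
    · intro w hw
      simp only [Finset.mem_filter, Finset.mem_univ, true_and] at hw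
      rw [List.mem_toFinset, List.mem_filter]
      exact ⟨(hmemtail _).mp ((hsupp' _).mpr hw), rfl⟩
    · intro w1 _ w2 _ h
      exact Sum.inr_injective h
    · intro z hz
      rw [List.mem_toFinset, List.mem_filter] at hz
      obtain ⟨hz1, hz2⟩ := hz
      obtain ⟨w, rfl⟩ := Sum.isRight_iff.mp hz2
      refine ⟨w, ?_, rfl⟩
      simp only [Finset.mem_filter, Finset.mem_univ, true_and]
      exact (hsupp' _).mp ((hmemtail _).mpr hz1)
  have hlALB : lA = lB := by rw [hcardL, hcardR, hcountR]
  have hlAle : lA ≤ Fintype.card A := by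
    rw [hlA, ← Finset.card_univ]
    exact Finset.card_filter_le _ _
  -- conclude lA = card A
  have hlAeq : lA = Fintype.card A := by omega
  have huniv : (Finset.univ.filter (fun u : A => T.degree (Sum.inl u) = 1)) = Finset.univ :=
    Finset.eq_univ_of_card _ (by rw [← hlA]; exact hlAeq)
  have hall : ∀ u : A, T.degree (Sum.inl u) = 1 := by
    intro u
    have := Finset.mem_univ u
    rw [← huniv, Finset.mem_filter] at this
    exact this.2
  have hsum1 : (∑ u : A, T.degree (Sum.inl u)) = Fintype.card A := by
    simp [hall]
  have hcard2 : Fintype.card (A ⊕ B) = 2 := by omega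
  have hle := hnodup.length_le_card
  omega
end

section
/- Let H be a graph on n vertices with δ(H) ≥ (2/3 − α')n for some constant 0 < α' ≪ 1, and let v_R ∈ V(H) be arbitrary. Then H has a spanning tree T with no vertex of degree 2 such that v_R has degree at least (2/3 − α')n − 1 in T, and the number of non-leaf vertices of T is at most (1/6 + α'/2)n + 2. -/
open Finset
namespace HISTAux
variable {V : Type*} [DecidableEq V]

def childs (K : Finset (V × V × V)) : Finset V := K.biUnion fun t => {t.2.1, t.2.2}

lemma mem_childs {K : Finset (V × V × V)} {x : V} :
    x ∈ childs K ↔ ∃ t ∈ K, x = t.2.1 ∨ x = t.2.2 := by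
  simp [childs, or_comm, eq_comm]

noncomputable def par (vR : V) (K : Finset (V × V × V)) (v : V) : V := by
  classical
  exact if h : ∃ t ∈ K, v = t.2.1 ∨ v = t.2.2 then h.choose.1 else vR

lemma par_not_child {vR : V} {K : Finset (V × V × V)} {v : V} (h : v ∉ childs K) :
    par vR K v = vR := by
  rw [par]; rw [dif_neg]; rw [mem_childs] at h; simpa using h

section withK

variable {H : SimpleGraph V} {vR : V} {K : Finset (V × V × V)}
variable (hadj : ∀ t ∈ K, H.Adj t.1 t.2.1 ∧ H.Adj t.1 t.2.2 ∧ t.2.1 ≠ t.2.2)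
variable (huniq : ∀ t ∈ K, ∀ t' ∈ K, ∀ x : V,
    (x = t.2.1 ∨ x = t.2.2) → (x = t'.2.1 ∨ x = t'.2.2) → t = t')
variable (hvR : vR ∉ childs K)
variable (hdepth : ∀ t ∈ K, (H.Adj vR t.1 ∧ t.1 ∉ childs K) ∨
      ∃ t' ∈ K, (t.1 = t'.2.1 ∨ t.1 = t'.2.2) ∧ H.Adj vR t'.1 ∧ t'.1 ∉ childs K)

include huniq in
lemma par_eq {t : V × V × V} (ht : t ∈ K) {x : V} (hx : x = t.2.1 ∨ x = t.2.2) :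
    par vR K x = t.1 := by
  have hex : ∃ t' ∈ K, x = t'.2.1 ∨ x = t'.2.2 := ⟨t, ht, hx⟩
  rw [par]
  rw [dif_pos hex]
  have hspec := hex.choose_spec
  have := huniq _ hspec.1 t ht x hspec.2 hx
  rw [this]

include hdepth hvR in
lemma parent_ne_vR {t : V × V × V} (ht : t ∈ K) : t.1 ≠ vR := by
  rcases hdepth t ht with ⟨h1, _⟩ | ⟨t', ht', hch, h1, _⟩
  · exact fun h => H.irrefl (h ▸ h1)
  · exact fun h => hvR (h ▸ mem_childs.2 ⟨t', ht', hch⟩)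


noncomputable def rk (vR : V) (K : Finset (V × V × V)) (v : V) : ℕ := by
  classical
  exact if v = vR then 0 else if v ∉ childs K then 1
    else if par vR K v ∉ childs K then 2 else 3

lemma rk_vR {vR : V} {K : Finset (V × V × V)} : rk vR K vR = 0 := by simp [rk]

lemma eq_vR_of_rk_eq_zero {vR : V} {K : Finset (V × V × V)} {v : V}
    (h : rk vR K v = 0) : v = vR := by
  by_contra hne
  rw [rk] at h
  rw [if_neg hne] at h
  split at h <;> [skip; split at h] <;> omega

include huniq hvR hdepth in
lemma rk_par {v : V} (hv : v ≠ vR) : rk vR K (par vR K v) < rk vR K v := by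
  classical
  by_cases hc : v ∈ childs K
  · obtain ⟨t, ht, hx⟩ := mem_childs.1 hc
    have hpar : par vR K v = t.1 := par_eq huniq ht hx
    by_cases hc2 : t.1 ∈ childs K
    · -- depth 2 parent
      rcases hdepth t ht with ⟨_, h2⟩ | ⟨t', ht', hch, _, h2⟩
      · exact absurd hc2 h2
      · have hpp : par vR K t.1 = t'.1 := par_eq huniq ht' hch
        have h1 : rk vR K v = 3 := by
          rw [rk, if_neg hv, if_neg (by simpa using hc), hpar, if_neg (by simpa using hc2)]
        have h3 : rk vR K (par vR K v) = 2 := by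
          have htne : t.1 ≠ vR := fun h => hvR (h ▸ hc2)
          rw [hpar, rk, if_neg htne, if_neg (by simpa using hc2), hpp, if_pos h2]
        omega
    · have h1 : rk vR K v = 2 := by
        rw [rk, if_neg hv, if_neg (by simpa using hc), hpar, if_pos hc2]
      have htne : t.1 ≠ vR := parent_ne_vR hvR hdepth ht
      have h3 : rk vR K (par vR K v) ≤ 1 := by
        rw [hpar, rk, if_neg htne, if_pos hc2]
      omega
  · have h1 : rk vR K v = 1 := by rw [rk, if_neg hv, if_pos hc]
    rw [par_not_child hc, rk_vR]
    omega

include huniq hvR hdepth in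
lemma par_ne {v : V} (hv : v ≠ vR) : par vR K v ≠ v :=
  fun h => lt_irrefl _ (h ▸ rk_par huniq hvR hdepth hv)

lemma par_vR {vR : V} {K : Finset (V × V × V)} (hvR : vR ∉ childs K) :
    par vR K vR = vR := par_not_child hvR

include huniq hvR hdepth in
lemma no2cycle {a b : V} (h1 : par vR K a = b) (h2 : par vR K b = a) : a = b := by
  by_cases ha : a = vR
  · rw [← h1, ha, par_vR hvR]
  by_cases hb : b = vR
  · rw [← h2, hb, par_vR hvR]
  have t1 := rk_par huniq hvR hdepth ha
  have t2 := rk_par huniq hvR hdepth hb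
  rw [h1] at t1
  rw [h2] at t2
  omega


noncomputable def TT (vR : V) (K : Finset (V × V × V)) : SimpleGraph V :=
  SimpleGraph.fromRel (fun a b => par vR K a = b)

lemma TT_adj {vR : V} {K : Finset (V × V × V)} {a b : V} :
    (TT vR K).Adj a b ↔ a ≠ b ∧ (par vR K a = b ∨ par vR K b = a) := by
  simp [TT]

variable (hcov : ∀ v : V, v ≠ vR → ¬ H.Adj vR v → v ∈ childs K)

include hadj huniq hvR hcov in
lemma adj_par' {v : V} (hv : v ≠ vR) : H.Adj v (par vR K v) := by
  by_cases hc : v ∈ childs K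
  · obtain ⟨t, ht, hx⟩ := mem_childs.1 hc
    rw [par_eq huniq ht hx]
    rcases hx with h | h
    · exact (h ▸ (hadj t ht).1).symm
    · exact (h ▸ (hadj t ht).2.1).symm
  · rw [par_not_child hc]
    by_contra hne
    exact hc (hcov v hv (fun h => hne h.symm))

include hadj huniq hvR hdepth hcov in
lemma TT_le : TT vR K ≤ H := by
  intro a b hab
  rw [TT_adj] at hab
  obtain ⟨hne, h | h⟩ := hab
  · have ha : a ≠ vR := by
      rintro rfl
      rw [par_vR hvR] at h
      exact hne h
    exact h ▸ adj_par' hadj huniq hvR hcov ha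
  · have hb : b ≠ vR := by
      rintro rfl
      rw [par_vR hvR] at h
      exact hne h.symm
    exact (h ▸ adj_par' hadj huniq hvR hcov hb).symm


include huniq hvR hdepth in
lemma TT_reach : ∀ (n : ℕ) (v : V), rk vR K v ≤ n → (TT vR K).Reachable v vR := by
  intro n
  induction n with
  | zero =>
    intro v hv
    rw [eq_vR_of_rk_eq_zero (Nat.le_zero.1 hv)]
  | succ n ih =>
    intro v hv
    by_cases h : v = vR
    · rw [h]
    · have hadjT : (TT vR K).Adj v (par vR K v) :=
        TT_adj.2 ⟨(par_ne huniq hvR hdepth h).symm, Or.inl rfl⟩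
      have hrk := rk_par huniq hvR hdepth h
      exact hadjT.reachable.trans (ih _ (by omega))

include huniq hvR hdepth in
lemma TT_connected [Fintype V] : (TT vR K).Connected := by
  have : ∀ v : V, (TT vR K).Reachable v vR :=
    fun v => TT_reach huniq hvR hdepth (rk vR K v) v le_rfl
  rw [SimpleGraph.connected_iff_exists_forall_reachable]
  exact ⟨vR, fun v => (this v).symm⟩

include hvR in
lemma TT_edge_form {e : Sym2 V} (he : e ∈ (TT vR K).edgeSet) :
    ∃ x : V, x ≠ vR ∧ e = s(x, par vR K x) := by
  induction e with
  | _ a b =>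
    rw [SimpleGraph.mem_edgeSet, TT_adj] at he
    obtain ⟨hne, h | h⟩ := he
    · refine ⟨a, ?_, by rw [h]⟩
      rintro rfl
      rw [par_vR hvR] at h
      exact hne h
    · refine ⟨b, ?_, by rw [h, Sym2.eq_swap]⟩
      rintro rfl
      rw [par_vR hvR] at h
      exact hne h.symm

include huniq hvR hdepth in
lemma TT_acyclic : (TT vR K).IsAcyclic := by
  classical
  intro v c hc
  have hlen3 : 3 ≤ c.length := hc.three_le_length
  have hnnil : ¬ c.Nil := by
    intro h
    rw [SimpleGraph.Walk.nil_iff_length_eq] at h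
    omega
  -- v is in the tail of the support
  have htail_ne : c.support.tail ≠ [] := by
    intro h
    have h2 : c.support.length = c.length + 1 := c.length_support
    rw [c.support_eq_cons, h] at h2
    simp only [List.length_cons, List.length_nil] at h2
    omega
  have hv_tail : v ∈ c.support.tail := by
    have hmem := List.getLast_mem htail_ne
    rwa [List.getLast_tail, c.getLast_support] at hmem
  have hmem_tail : ∀ x : V, x ∈ c.support → x ∈ c.support.tail := by
    intro x hx
    rw [c.support_eq_cons] at hx
    rcases List.mem_cons.1 hx with rfl | h
    · exact hv_tail
    · exact h
  set S : Finset V := c.support.tail.toFinset with hS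
  set F : Finset V := S.filter (fun x => x ≠ vR ∧ s(x, par vR K x) ∈ c.edges) with hFdef
  have himg : F.image (fun x => s(x, par vR K x)) = c.edges.toFinset := by
    ext e
    simp only [mem_image, List.mem_toFinset, hFdef, mem_filter]
    constructor
    · rintro ⟨x, ⟨_, _, hx⟩, rfl⟩
      exact hx
    · intro he
      obtain ⟨x, hxne, rfl⟩ := TT_edge_form hvR (c.edges_subset_edgeSet he)
      refine ⟨x, ⟨?_, hxne, he⟩, rfl⟩
      rw [hS, List.mem_toFinset]
      exact hmem_tail x (SimpleGraph.Walk.fst_mem_support_of_mem_edges c he)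
  have hinj : Set.InjOn (fun x => s(x, par vR K x)) F := by
    intro x hx y hy hxy
    simp only [Sym2.eq_iff] at hxy
    rcases hxy with ⟨h1, _⟩ | ⟨h1, h2⟩
    · exact h1
    · exact no2cycle huniq hvR hdepth h2 h1.symm
  have hScard : S.card = c.length := by
    rw [hS, List.toFinset_card_of_nodup hc.support_nodup]
    have h1 : c.support.length = c.length + 1 := c.length_support
    have h2 : c.support.length = c.support.tail.length + 1 := by
      conv_lhs => rw [c.support_eq_cons]
      rfl
    omega
  have hEcard : c.edges.toFinset.card = c.length := by
    rw [List.toFinset_card_of_nodup hc.edges_nodup, c.length_edges]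
  have hFcard : F.card = c.length := by
    rw [← Finset.card_image_of_injOn hinj, himg, hEcard]
  have hFS : F = S := Finset.eq_of_subset_of_card_le (Finset.filter_subset _ _) (by omega)
  -- minimal rank element
  have hSne : S.Nonempty := by
    rw [← Finset.card_pos, hScard]; omega
  obtain ⟨m, hmS, hmin⟩ := S.exists_min_image (rk vR K) hSne
  rw [← hFS, hFdef, mem_filter] at hmS
  obtain ⟨hmS', hmne, hmedge⟩ := hmS
  have hpar_mem : par vR K m ∈ S := by
    rw [hS, List.mem_toFinset]
    exact hmem_tail _ (SimpleGraph.Walk.snd_mem_support_of_mem_edges c hmedge)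
  have := hmin _ hpar_mem
  have := rk_par huniq hvR hdepth hmne
  omega


section deg
variable [Fintype V]

noncomputable def kids (vR : V) (K : Finset (V × V × V)) (v : V) : Finset V := by
  classical
  exact Finset.univ.filter (fun u => u ≠ vR ∧ par vR K u = v)

lemma mem_kids {vR v u : V} {K : Finset (V × V × V)} :
    u ∈ kids vR K v ↔ u ≠ vR ∧ par vR K u = v := by
  simp [kids]

include hvR in
lemma nbr_vR : (TT vR K).neighborSet vR = ↑(kids vR K vR) := by
  ext u
  simp only [SimpleGraph.mem_neighborSet, TT_adj, Finset.coe_filter, Set.mem_setOf_eq,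
    Finset.mem_coe, mem_kids]
  constructor
  · rintro ⟨hne, h | h⟩
    · exact absurd ((par_vR hvR).symm.trans h) hne
    · exact ⟨Ne.symm hne, h⟩
  · rintro ⟨hne, h⟩
    exact ⟨Ne.symm hne, Or.inr h⟩

include huniq hvR hdepth in
lemma par_notin_kids {v : V} (hv : v ≠ vR) : par vR K v ∉ kids vR K v := by
  rw [mem_kids]
  rintro ⟨h1, h2⟩
  exact par_ne huniq hvR hdepth hv (no2cycle huniq hvR hdepth rfl h2).symm

include huniq hvR hdepth in
lemma nbr_ne {v : V} (hv : v ≠ vR) :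
    (TT vR K).neighborSet v = ↑(insert (par vR K v) (kids vR K v)) := by
  ext u
  simp only [SimpleGraph.mem_neighborSet, TT_adj, Finset.coe_insert, Set.mem_insert_iff,
    Finset.mem_coe, mem_kids]
  constructor
  · rintro ⟨hne, h | h⟩
    · exact Or.inl h.symm
    · refine Or.inr ⟨?_, h⟩
      rintro rfl
      rw [par_vR hvR] at h
      exact hv h.symm
  · rintro (rfl | ⟨hne, h⟩)
    · exact ⟨(par_ne huniq hvR hdepth hv).symm, Or.inl rfl⟩
    · refine ⟨?_, Or.inr h⟩
      rintro rfl
      exact (par_ne huniq hvR hdepth hv) h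

variable [DecidableRel H.Adj]

include huniq hvR hdepth hcov in
lemma kids_vR_eq : kids vR K vR = H.neighborFinset vR \ childs K := by
  ext u
  rw [mem_kids, Finset.mem_sdiff, SimpleGraph.mem_neighborFinset]
  constructor
  · rintro ⟨hne, hpar⟩
    have hnc : u ∉ childs K := by
      intro hc
      obtain ⟨t, ht, hx⟩ := mem_childs.1 hc
      exact parent_ne_vR hvR hdepth ht ((par_eq huniq ht hx).symm.trans hpar)
    exact ⟨by_contra fun h => hnc (hcov u hne h), hnc⟩
  · rintro ⟨hadj', hnc⟩
    exact ⟨fun h => H.irrefl (h ▸ hadj'), par_not_child hnc⟩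

include huniq hvR in
lemma kids_eq {v : V} (hv : v ≠ vR) :
    kids vR K v = (K.filter (fun t => t.1 = v)).biUnion (fun t => {t.2.1, t.2.2}) := by
  classical
  ext u
  rw [mem_kids, Finset.mem_biUnion]
  constructor
  · rintro ⟨hne, hpar⟩
    have hc : u ∈ childs K := by
      by_contra hnc
      exact hv (hpar.symm.trans (par_not_child hnc))
    obtain ⟨t, ht, hx⟩ := mem_childs.1 hc
    refine ⟨t, Finset.mem_filter.2 ⟨ht, ?_⟩, by rcases hx with h | h <;> simp [h]⟩
    rw [← hpar, par_eq huniq ht hx]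
  · rintro ⟨t, ht, hx⟩
    rw [Finset.mem_filter] at ht
    simp only [Finset.mem_insert, Finset.mem_singleton] at hx
    exact ⟨fun h => hvR (h ▸ mem_childs.2 ⟨t, ht.1, hx⟩),
      (par_eq huniq ht.1 hx).trans ht.2⟩

include hadj huniq hvR in
lemma kids_card_even {v : V} (hv : v ≠ vR) :
    (kids vR K v).card = 2 * (K.filter (fun t => t.1 = v)).card := by
  classical
  rw [kids_eq huniq hvR hv]
  rw [Finset.card_biUnion]
  · rw [Finset.sum_congr rfl (fun t ht => ?_), Finset.sum_const, smul_eq_mul, mul_comm]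
    have hne := (hadj t (Finset.mem_filter.1 ht).1).2.2
    rw [Finset.card_insert_of_notMem (by simpa using hne), Finset.card_singleton]
  · intro t ht t' ht' hne
    rw [Function.onFun_apply, Finset.disjoint_left]
    intro x hx hx'
    simp only [Finset.mem_insert, Finset.mem_singleton] at hx hx'
    exact hne (huniq t (Finset.mem_filter.1 ht).1 t' (Finset.mem_filter.1 ht').1 x hx hx')


include hadj huniq hvR hcov hdepth in
lemma master [Fintype V] [DecidableRel H.Adj]
    (hNc : ((H.neighborFinset vR) ∩ childs K).card ≤ 1)
    (hNf4 : 4 ≤ (H.neighborFinset vR).card) :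
    ∃ T' : SimpleGraph V, T' ≤ H ∧ T'.IsTree ∧
      (∀ v : V, (T'.neighborSet v).ncard ≠ 2) ∧
      (H.neighborFinset vR).card ≤ (T'.neighborSet vR).ncard + 1 ∧
      ({v : V | 2 ≤ (T'.neighborSet v).ncard}).ncard ≤ 1 + K.card := by
  classical
  refine ⟨TT vR K, TT_le hadj huniq hvR hdepth hcov, ?_, ?_, ?_, ?_⟩
  · rw [SimpleGraph.isTree_iff]
    exact ⟨TT_connected huniq hvR hdepth, TT_acyclic huniq hvR hdepth⟩
  · -- degrees ≠ 2
    intro v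
    by_cases hv : v = vR
    · rw [hv]
      rw [nbr_vR hvR, Set.ncard_coe_finset, kids_vR_eq huniq hvR hdepth hcov]
      have h1 : ((H.neighborFinset vR) ∩ childs K).card + ((H.neighborFinset vR) \ childs K).card
          = (H.neighborFinset vR).card := Finset.card_inter_add_card_sdiff _ _
      omega
    · rw [nbr_ne huniq hvR hdepth hv, Set.ncard_coe_finset,
        Finset.card_insert_of_notMem (par_notin_kids huniq hvR hdepth hv),
        kids_card_even hadj huniq hvR hv]
      omega
  · rw [nbr_vR hvR, Set.ncard_coe_finset, kids_vR_eq huniq hvR hdepth hcov]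
    have h1 : ((H.neighborFinset vR) ∩ childs K).card + ((H.neighborFinset vR) \ childs K).card
        = (H.neighborFinset vR).card := Finset.card_inter_add_card_sdiff _ _
    omega
  · have hsub : {v : V | 2 ≤ ((TT vR K).neighborSet v).ncard} ⊆
        ↑(insert vR (K.image Prod.fst)) := by
      intro v hv
      simp only [Set.mem_setOf_eq] at hv
      by_cases h : v = vR
      · simp [h]
      · rw [nbr_ne huniq hvR hdepth h, Set.ncard_coe_finset,
          Finset.card_insert_of_notMem (par_notin_kids huniq hvR hdepth h),
          kids_card_even hadj huniq hvR h] at hv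
        have hfil : (K.filter (fun t => t.1 = v)).Nonempty := by
          rw [← Finset.card_pos]; omega
        obtain ⟨t, ht⟩ := hfil
        rw [Finset.mem_filter] at ht
        simp only [Finset.coe_insert, Set.mem_insert_iff, Finset.mem_coe, Finset.mem_image]
        exact Or.inr ⟨t, ht.1, ht.2⟩
    calc ({v : V | 2 ≤ ((TT vR K).neighborSet v).ncard}).ncard
        ≤ (↑(insert vR (K.image Prod.fst)) : Set V).ncard :=
          Set.ncard_le_ncard hsub (Set.toFinite _)
      _ = (insert vR (K.image Prod.fst)).card := Set.ncard_coe_finset _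
      _ ≤ 1 + K.card := by
          have := Finset.card_insert_le vR (K.image Prod.fst)
          have := Finset.card_image_le (f := Prod.fst) (s := K)
          omega

end deg

end withK

end HISTAux

set_option maxHeartbeats 4000000 in
/-- Let `H` be a graph on `n` vertices with `δ(H) ≥ (2/3 − α')n` for a small constant
`α' > 0` (explicitly `8α' + 6/n < 1/3`), and let `v_R ∈ V(H)` be arbitrary.  Then `H` has a
spanning tree `T` with no vertex of degree 2 (a HIST) such that `v_R` has degree at least
`(2/3 − α')n − 1` in `T` and the number of non-leaves of `T` is at most `(1/6 + α'/2)n + 2`. -/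
theorem stmt_7 {V : Type*} [Fintype V] (H : SimpleGraph V) (α' : ℝ)
    (hα : 0 < α')
    (hsmall : 8 * α' + 6 / (Fintype.card V : ℝ) < 1 / 3)
    (hδ : ∀ v : V, ((2 : ℝ) / 3 - α') * (Fintype.card V : ℝ) ≤ (H.neighborSet v).ncard)
    (vR : V) :
    ∃ T : SimpleGraph V, T ≤ H ∧ T.IsTree ∧
      (∀ v : V, (T.neighborSet v).ncard ≠ 2) ∧
      ((2 : ℝ) / 3 - α') * (Fintype.card V : ℝ) - 1 ≤ ((T.neighborSet vR).ncard : ℝ) ∧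
      ({v : V | 2 ≤ (T.neighborSet v).ncard}.ncard : ℝ) ≤
        (1 / 6 + α' / 2) * (Fintype.card V : ℝ) + 2 := by
  classical
  open HISTAux Finset in
  set n : ℕ := Fintype.card V with hn
  have hn0 : 0 < n := Fintype.card_pos_iff.2 ⟨vR⟩
  have hn19 : (19 : ℝ) ≤ (n : ℝ) := by
    by_contra hlt
    push_neg at hlt
    have h1 : (1:ℝ) ≤ n := by exact_mod_cast hn0
    have hn18 : (n:ℝ) ≤ 18 := by
      have : n < 19 := by exact_mod_cast hlt
      have : n ≤ 18 := by omega
      exact_mod_cast this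
    have : (6:ℝ) / n ≥ 1/3 := by
      rw [ge_iff_le, le_div_iff₀ (by linarith)]
      linarith
    linarith
  have hα24 : α' < 1/24 := by
    have h6 : (0:ℝ) ≤ 6 / n := by positivity
    linarith
  set D : ℝ := (2/3 - α') * n with hD
  have hnpos : (0:ℝ) < n := by positivity
  have hsmalln : 8 * α' * n + 6 < n / 3 := by
    have h := (mul_lt_mul_of_pos_right hsmall hnpos)
    rw [add_mul, div_mul_eq_mul_div, mul_div_assoc, div_self (ne_of_gt hnpos)] at h
    calc 8 * α' * n + 6 = 8 * α' * n + 6 * 1 := by ring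
    _ < 1/3 * n := by exact_mod_cast h
    _ = n / 3 := by ring
  -- degrees
  have hdeg : ∀ v : V, D ≤ ((H.neighborFinset v).card : ℝ) := by
    intro v
    have := hδ v
    have hcast : ((H.neighborSet v).ncard : ℝ) = ((H.neighborFinset v).card : ℝ) := by
      congr 1
      rw [SimpleGraph.neighborFinset_def, Set.ncard_eq_toFinset_card']
    rw [← hcast]
    exact this

  set Nf : Finset V := H.neighborFinset vR with hNf
  have hvRNf : vR ∉ Nf := by simp [hNf]
  have hNfD : D ≤ (Nf.card : ℝ) := hdeg vR
  have hNfub : (Nf.card : ℝ) ≤ (n : ℝ) - 1 := by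
    have hsub : Nf ⊆ Finset.univ.erase vR := fun x hx =>
      Finset.mem_erase.2 ⟨fun h => hvRNf (h ▸ hx), Finset.mem_univ x⟩
    have := Finset.card_le_card hsub
    have h2 : (Finset.univ.erase vR).card = n - 1 := by
      rw [Finset.card_erase_of_mem (Finset.mem_univ vR), Finset.card_univ]
    have : Nf.card ≤ n - 1 := h2 ▸ this
    have : (Nf.card : ℝ) ≤ ((n - 1 : ℕ) : ℝ) := by exact_mod_cast this
    rwa [Nat.cast_sub hn0, Nat.cast_one] at this
  set Rf : Finset V := Finset.univ \ insert vR Nf with hRf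
  have hmemRf : ∀ {x : V}, x ∈ Rf ↔ (x ≠ vR ∧ x ∉ Nf) := by
    intro x
    simp [hRf, not_or]
  have hRcard : (Rf.card : ℝ) = (n : ℝ) - 1 - Nf.card := by
    have h1 : Rf.card = n - (insert vR Nf).card := by
      rw [hRf, Finset.card_sdiff_of_subset (Finset.subset_univ _), Finset.card_univ]
    rw [Finset.card_insert_of_notMem hvRNf] at h1
    have h2 : Nf.card + 1 ≤ n := by
      have : insert vR Nf ⊆ Finset.univ := Finset.subset_univ _
      have := Finset.card_le_card this
      rwa [Finset.card_insert_of_notMem hvRNf, Finset.card_univ] at this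
    rw [h1]
    push_cast [Nat.cast_sub h2]
    ring
  have hRub : (Rf.card : ℝ) ≤ (1/3 + α') * n - 1 := by
    rw [hRcard, hD] at *
    nlinarith [hNfD]
  -- candidate sets
  set C : V → Finset V := fun r => H.neighborFinset r ∩ Nf with hC
  have hCsub : ∀ r, C r ⊆ Nf := fun r => Finset.inter_subset_right
  have hCcard : ∀ r ∈ Rf, 2*D - n + 2 ≤ ((C r).card : ℝ) := by
    intro r hr
    have hsplit : (C r).card + (H.neighborFinset r \ Nf).card = (H.neighborFinset r).card := by
      rw [hC]
      exact Finset.card_inter_add_card_sdiff _ _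
    have hsub : H.neighborFinset r \ Nf ⊆ Rf.erase r := by
      intro u hu
      rw [Finset.mem_sdiff, SimpleGraph.mem_neighborFinset] at hu
      refine Finset.mem_erase.2 ⟨fun h => H.irrefl (h ▸ hu.1), hmemRf.2 ⟨?_, hu.2⟩⟩
      rintro rfl
      exact (hmemRf.1 hr).2 (by rw [hNf, SimpleGraph.mem_neighborFinset]; exact hu.1.symm)
    have hcard2 : ((H.neighborFinset r \ Nf).card : ℝ) ≤ (Rf.card : ℝ) - 1 := by
      have h3 := Finset.card_le_card hsub
      have h4 : (Rf.erase r).card = Rf.card - 1 := Finset.card_erase_of_mem hr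
      have h5 : 1 ≤ Rf.card := Finset.card_pos.2 ⟨r, hr⟩
      have : (H.neighborFinset r \ Nf).card ≤ Rf.card - 1 := h4 ▸ h3
      have := (Nat.cast_le (α := ℝ)).2 this
      rwa [Nat.cast_sub h5, Nat.cast_one] at this
    have hdegr := hdeg r
    have : ((C r).card : ℝ) + ((H.neighborFinset r \ Nf).card : ℝ) = ((H.neighborFinset r).card : ℝ) := by
      exact_mod_cast hsplit
    rw [hRcard] at hcard2
    linarith
  have hquarter : (n:ℝ)/4 + 7/2 < 2*D - n + 2 := by
    rw [hD]
    nlinarith [hsmalln]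

  -- maximal matching
  set good : Finset (V × V × V) → Prop := fun M =>
    (∀ t ∈ M, t.2.1 ∈ Rf ∧ t.2.2 ∈ Rf ∧ t.1 ∈ C t.2.1 ∧ t.1 ∈ C t.2.2 ∧ t.2.1 ≠ t.2.2)
    ∧ (∀ t ∈ M, ∀ t' ∈ M, ∀ x : V,
        (x = t.2.1 ∨ x = t.2.2) → (x = t'.2.1 ∨ x = t'.2.2) → t = t') with hgooddef
  obtain ⟨M, hgood, hmax⟩ : ∃ M, good M ∧ ∀ M', good M' → M'.card ≤ M.card := by
    obtain ⟨M, hM, hbest⟩ := Finset.exists_max_image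
      (Finset.univ.filter good) Finset.card
      ⟨∅, Finset.mem_filter.2 ⟨Finset.mem_univ _, by simp [hgooddef]⟩⟩
    exact ⟨M, (Finset.mem_filter.1 hM).2,
      fun M' h' => hbest M' (Finset.mem_filter.2 ⟨Finset.mem_univ _, h'⟩)⟩
  set L : Finset V := Rf \ childs M with hL
  have hchsub : childs M ⊆ Rf := by
    intro x hx
    obtain ⟨t, ht, hx⟩ := mem_childs.1 hx
    rcases hx with h | h
    · exact h ▸ (hgood.1 t ht).1
    · exact h ▸ (hgood.1 t ht).2.1
  have hLdisj : ∀ a ∈ L, ∀ b ∈ L, a ≠ b → C a ∩ C b = ∅ := by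
    intro a ha b hb hab
    by_contra hne
    obtain ⟨q, hq⟩ := Finset.nonempty_iff_ne_empty.2 hne
    rw [Finset.mem_inter] at hq
    rw [hL, Finset.mem_sdiff] at ha hb
    have hnew : (q, a, b) ∉ M := fun h => ha.2 (mem_childs.2 ⟨(q,a,b), h, Or.inl rfl⟩)
    have hgood' : good (insert (q, a, b) M) := by
      constructor
      · intro t ht
        rcases Finset.mem_insert.1 ht with rfl | h
        · exact ⟨ha.1, hb.1, hq.1, hq.2, hab⟩
        · exact hgood.1 t h
      · intro t ht t' ht' x hx hx'
        rcases Finset.mem_insert.1 ht with rfl | h <;>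
          rcases Finset.mem_insert.1 ht' with rfl | h'
        · rfl
        · exfalso
          simp only at hx
          rcases hx with rfl | rfl
          · exact ha.2 (mem_childs.2 ⟨t', h', hx'⟩)
          · exact hb.2 (mem_childs.2 ⟨t', h', hx'⟩)
        · exfalso
          simp only at hx'
          rcases hx' with rfl | rfl
          · exact ha.2 (mem_childs.2 ⟨t, h, hx⟩)
          · exact hb.2 (mem_childs.2 ⟨t, h, hx⟩)
        · exact hgood.2 t h t' h' x hx hx'
    have := hmax _ hgood'
    rw [Finset.card_insert_of_notMem hnew] at this
    omega
  have hchcard : (childs M).card = 2 * M.card := by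
    rw [childs, Finset.card_biUnion]
    · rw [Finset.sum_congr rfl (fun t ht => ?_), Finset.sum_const, smul_eq_mul, mul_comm]
      rw [Finset.card_insert_of_notMem (by simpa using (hgood.1 t ht).2.2.2.2),
        Finset.card_singleton]
    · intro t ht t' ht' hne
      rw [Function.onFun_apply, Finset.disjoint_left]
      intro x hx hx'
      simp only [Finset.mem_insert, Finset.mem_singleton] at hx hx'
      exact hne (hgood.2 t ht t' ht' x hx hx')
  have h2ML : 2 * M.card + L.card = Rf.card := by
    rw [hL, Finset.card_sdiff_of_subset hchsub, ← hchcard]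
    have := Finset.card_le_card hchsub
    omega
  have hLNf : L.biUnion C ⊆ Nf := Finset.biUnion_subset.2 fun r _ => hCsub r
  have hL3 : L.card ≤ 3 := by
    by_contra hgt
    push_neg at hgt
    have hsum : (L.biUnion C).card = ∑ r ∈ L, (C r).card := by
      rw [Finset.card_biUnion]
      intro a ha b hb hab
      rw [Function.onFun_apply, Finset.disjoint_left]
      intro x hx hx'
      have hmem : x ∈ C a ∩ C b := Finset.mem_inter.2 ⟨hx, hx'⟩
      rw [hLdisj a ha b hb hab] at hmem
      exact absurd hmem (Finset.notMem_empty x)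
    have hbig : (L.card : ℝ) * (2*D - n + 2) ≤ ((L.biUnion C).card : ℝ) := by
      rw [hsum]
      push_cast
      calc (L.card : ℝ) * (2*D - n + 2) = ∑ _r ∈ L, (2*D - n + 2) := by
            rw [Finset.sum_const, nsmul_eq_mul]
        _ ≤ ∑ r ∈ L, ((C r).card : ℝ) := by
            refine Finset.sum_le_sum fun r hr => hCcard r ?_
            rw [hL, Finset.mem_sdiff] at hr
            exact hr.1
    have hsmall2 : ((L.biUnion C).card : ℝ) ≤ (n : ℝ) - 1 := by
      have := Finset.card_le_card hLNf
      calc ((L.biUnion C).card : ℝ) ≤ (Nf.card : ℝ) := by exact_mod_cast this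
        _ ≤ (n : ℝ) - 1 := hNfub
    have h4 : (4 : ℝ) ≤ (L.card : ℝ) := by exact_mod_cast hgt
    nlinarith [hquarter]

  have hNfRf : ∀ {x : V}, x ∈ Nf → x ∉ Rf := fun hx hx' => (hmemRf.1 hx').2 hx
  have hadjM : ∀ t ∈ M, H.Adj t.1 t.2.1 ∧ H.Adj t.1 t.2.2 ∧ t.2.1 ≠ t.2.2 := by
    intro t ht
    obtain ⟨_, _, h1, h2, h3⟩ := hgood.1 t ht
    rw [hC] at h1 h2
    simp only [Finset.mem_inter, SimpleGraph.mem_neighborFinset] at h1 h2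
    exact ⟨h1.1.symm, h2.1.symm, h3⟩
  have hparNf : ∀ t ∈ M, t.1 ∈ Nf := by
    intro t ht
    exact hCsub _ (hgood.1 t ht).2.2.1
  obtain ⟨M1, L1, hadj1, huniq1, hch1, hL1eq, hL1le, hdepth1, hcard1⟩ :
      ∃ (M1 : Finset (V × V × V)) (L1 : Finset V),
        (∀ t ∈ M1, H.Adj t.1 t.2.1 ∧ H.Adj t.1 t.2.2 ∧ t.2.1 ≠ t.2.2) ∧
        (∀ t ∈ M1, ∀ t' ∈ M1, ∀ x : V,
          (x = t.2.1 ∨ x = t.2.2) → (x = t'.2.1 ∨ x = t'.2.2) → t = t') ∧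
        childs M1 ⊆ Rf ∧
        Rf \ childs M1 = L1 ∧ L1.card ≤ 1 ∧
        (∀ t ∈ M1, (t.1 ∈ Nf ∧ t.1 ∉ childs M1) ∨
          (∃ t' ∈ M1, (t.1 = t'.2.1 ∨ t.1 = t'.2.2) ∧ t'.1 ∈ Nf ∧ t'.1 ∉ childs M1)) ∧
        2 * M1.card + L1.card = Rf.card := by
    by_cases hLle : L.card ≤ 1
    · refine ⟨M, L, hadjM, hgood.2, hchsub, hL.symm, hLle, ?_, h2ML⟩
      intro t ht
      exact Or.inl ⟨hparNf t ht, fun h => hNfRf (hparNf t ht) (hchsub h)⟩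
    · push_neg at hLle
      obtain ⟨r1, hr1, r2, hr2, hr12⟩ := Finset.one_lt_card.1 hLle
      -- find w
      have hIsub : (H.neighborFinset r1 ∩ H.neighborFinset r2) ⊆ Rf := by
        intro u hu
        rw [Finset.mem_inter, SimpleGraph.mem_neighborFinset,
          SimpleGraph.mem_neighborFinset] at hu
        refine hmemRf.2 ⟨?_, ?_⟩
        · rintro rfl
          have : r1 ∈ Nf := by
            rw [hNf, SimpleGraph.mem_neighborFinset]
            exact hu.1.symm
          exact (hmemRf.1 (Finset.mem_sdiff.1 (hL ▸ hr1) |>.1)).2 this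
        · intro huNf
          have hmem : u ∈ C r1 ∩ C r2 := by
            rw [hC, Finset.mem_inter]
            constructor <;> rw [Finset.mem_inter, SimpleGraph.mem_neighborFinset]
            · exact ⟨hu.1, huNf⟩
            · exact ⟨hu.2, huNf⟩
          rw [hLdisj r1 hr1 r2 hr2 hr12] at hmem
          exact absurd hmem (Finset.notMem_empty u)
      have hIcard : 2*D - (n:ℝ) ≤ ((H.neighborFinset r1 ∩ H.neighborFinset r2).card : ℝ) := by
        have h1 := Finset.card_inter_add_card_union (H.neighborFinset r1) (H.neighborFinset r2)
        have h2 : (H.neighborFinset r1 ∪ H.neighborFinset r2).card ≤ n := by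
          rw [hn]
          exact Finset.card_le_univ _
        have d1 := hdeg r1
        have d2 := hdeg r2
        have h1' : ((H.neighborFinset r1 ∩ H.neighborFinset r2).card : ℝ)
            + ((H.neighborFinset r1 ∪ H.neighborFinset r2).card : ℝ)
            = ((H.neighborFinset r1).card : ℝ) + ((H.neighborFinset r2).card : ℝ) := by
          exact_mod_cast h1
        have h2' : ((H.neighborFinset r1 ∪ H.neighborFinset r2).card : ℝ) ≤ (n : ℝ) := by
          exact_mod_cast h2
        linarith
      have hWne : ((H.neighborFinset r1 ∩ H.neighborFinset r2) \ L).Nonempty := by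
        rw [← Finset.card_pos]
        by_contra hc
        push_neg at hc
        have hc0 : ((H.neighborFinset r1 ∩ H.neighborFinset r2) \ L).card = 0 := by omega
        have hsplit := Finset.card_sdiff_add_card_inter
          (H.neighborFinset r1 ∩ H.neighborFinset r2) L
        have hint : ((H.neighborFinset r1 ∩ H.neighborFinset r2) ∩ L).card ≤ 3 :=
          le_trans (Finset.card_le_card Finset.inter_subset_right) hL3
        have : (H.neighborFinset r1 ∩ H.neighborFinset r2).card ≤ 3 := by omega
        have : ((H.neighborFinset r1 ∩ H.neighborFinset r2).card : ℝ) ≤ 3 := by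
          exact_mod_cast this
        nlinarith [hquarter, hn19]
      obtain ⟨w, hw⟩ := hWne
      rw [Finset.mem_sdiff] at hw
      have hwRf : w ∈ Rf := hIsub hw.1
      have hwch : w ∈ childs M := by
        by_contra hc
        exact hw.2 (hL ▸ Finset.mem_sdiff.2 ⟨hwRf, hc⟩)
      have hr1L := hL ▸ hr1
      have hr2L := hL ▸ hr2
      rw [Finset.mem_sdiff] at hr1L hr2L
      have hnew : (w, r1, r2) ∉ M := fun h => hr1L.2 (mem_childs.2 ⟨_, h, Or.inl rfl⟩)
      have hch_ins : childs (insert (w, r1, r2) M) = insert r1 (insert r2 (childs M)) := by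
        unfold childs
        rw [Finset.biUnion_insert]
        ext x
        simp only [Finset.mem_union, Finset.mem_insert, Finset.mem_singleton]
        tauto
      refine ⟨insert (w, r1, r2) M, L \ {r1, r2}, ?_, ?_, ?_, ?_, ?_, ?_, ?_⟩
      · intro t ht
        rcases Finset.mem_insert.1 ht with rfl | h
        · rw [Finset.mem_inter, SimpleGraph.mem_neighborFinset,
            SimpleGraph.mem_neighborFinset] at hw
          exact ⟨hw.1.1.symm, hw.1.2.symm, hr12⟩
        · exact hadjM t h
      · intro t ht t' ht' x hx hx'
        rcases Finset.mem_insert.1 ht with rfl | h <;>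
          rcases Finset.mem_insert.1 ht' with rfl | h'
        · rfl
        · exfalso
          simp only at hx
          rcases hx with rfl | rfl
          · exact hr1L.2 (mem_childs.2 ⟨t', h', hx'⟩)
          · exact hr2L.2 (mem_childs.2 ⟨t', h', hx'⟩)
        · exfalso
          simp only at hx'
          rcases hx' with rfl | rfl
          · exact hr1L.2 (mem_childs.2 ⟨t, h, hx⟩)
          · exact hr2L.2 (mem_childs.2 ⟨t, h, hx⟩)
        · exact hgood.2 t h t' h' x hx hx'
      · rw [hch_ins]
        intro x hx
        rcases Finset.mem_insert.1 hx with rfl | hx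
        · exact hr1L.1
        · rcases Finset.mem_insert.1 hx with rfl | hx
          · exact hr2L.1
          · exact hchsub hx
      · rw [hch_ins, hL]
        ext x
        simp only [Finset.mem_sdiff, Finset.mem_insert, Finset.mem_singleton, not_or]
        tauto
      · have hsub12 : {r1, r2} ⊆ L := by
          intro x hx
          rcases Finset.mem_insert.1 hx with rfl | hx
          · exact hr1
          · exact (Finset.mem_singleton.1 hx) ▸ hr2
        rw [Finset.card_sdiff_of_subset hsub12]
        have : ({r1, r2} : Finset V).card = 2 := Finset.card_pair hr12
        omega
      · intro t ht
        have hNr12 : ∀ t' ∈ M, t'.1 ∈ Nf ∧ t'.1 ∉ childs (insert (w, r1, r2) M) := by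
          intro t' ht'
          refine ⟨hparNf t' ht', ?_⟩
          rw [hch_ins]
          intro hc
          rcases Finset.mem_insert.1 hc with rfl | hc
          · exact hNfRf (hparNf t' ht') hr1L.1
          · rcases Finset.mem_insert.1 hc with rfl | hc
            · exact hNfRf (hparNf t' ht') hr2L.1
            · exact hNfRf (hparNf t' ht') (hchsub hc)
        rcases Finset.mem_insert.1 ht with rfl | h
        · obtain ⟨t', ht', hx⟩ := mem_childs.1 hwch
          exact Or.inr ⟨t', Finset.mem_insert_of_mem ht', hx, hNr12 t' ht'⟩
        · exact Or.inl (hNr12 t h)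
      · rw [Finset.card_insert_of_notMem hnew]
        have hsub12 : {r1, r2} ⊆ L := by
          intro x hx
          rcases Finset.mem_insert.1 hx with rfl | hx
          · exact hr1
          · exact (Finset.mem_singleton.1 hx) ▸ hr2
        rw [Finset.card_sdiff_of_subset hsub12]
        have h2 : ({r1, r2} : Finset V).card = 2 := Finset.card_pair hr12
        omega

  have hvRRf : vR ∉ Rf := fun h => (hmemRf.1 h).1 rfl
  obtain ⟨K, hadjK, huniqK, hvRK, hcovK, hdepthK, hNcK, hKcard⟩ :
      ∃ K : Finset (V × V × V),
        (∀ t ∈ K, H.Adj t.1 t.2.1 ∧ H.Adj t.1 t.2.2 ∧ t.2.1 ≠ t.2.2) ∧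
        (∀ t ∈ K, ∀ t' ∈ K, ∀ x : V,
          (x = t.2.1 ∨ x = t.2.2) → (x = t'.2.1 ∨ x = t'.2.2) → t = t') ∧
        vR ∉ childs K ∧
        (∀ v : V, v ≠ vR → ¬ H.Adj vR v → v ∈ childs K) ∧
        (∀ t ∈ K, (H.Adj vR t.1 ∧ t.1 ∉ childs K) ∨
          (∃ t' ∈ K, (t.1 = t'.2.1 ∨ t.1 = t'.2.2) ∧ H.Adj vR t'.1 ∧ t'.1 ∉ childs K)) ∧
        (Nf ∩ childs K).card ≤ 1 ∧
        2 * K.card ≤ Rf.card + 1 := by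
    have hAdjNf : ∀ {x : V}, x ∈ Nf → H.Adj vR x := by
      intro x hx
      rwa [hNf, SimpleGraph.mem_neighborFinset] at hx
    have hcovRf : ∀ v : V, v ≠ vR → ¬ H.Adj vR v → v ∈ Rf := by
      intro v h1 h2
      refine hmemRf.2 ⟨h1, fun hc => h2 (hAdjNf hc)⟩
    by_cases hL1 : L1.card = 0
    · -- K = M1
      have hRfch : Rf \ childs M1 = ∅ := by
        rw [hL1eq]
        exact Finset.card_eq_zero.1 hL1
      refine ⟨M1, hadj1, huniq1, fun h => hvRRf (hch1 h), ?_, ?_, ?_, by omega⟩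
      · intro v h1 h2
        have := hcovRf v h1 h2
        by_contra hc
        have : v ∈ Rf \ childs M1 := Finset.mem_sdiff.2 ⟨this, hc⟩
        rw [hRfch] at this
        exact absurd this (Finset.notMem_empty v)
      · intro t ht
        rcases hdepth1 t ht with ⟨h1, h2⟩ | ⟨t', ht', hx, h1, h2⟩
        · exact Or.inl ⟨hAdjNf h1, h2⟩
        · exact Or.inr ⟨t', ht', hx, hAdjNf h1, h2⟩
      · have : Nf ∩ childs M1 = ∅ := by
          rw [Finset.eq_empty_iff_forall_notMem]
          intro x hx
          rw [Finset.mem_inter] at hx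
          exact hNfRf hx.1 (hch1 hx.2)
        rw [this]
        simp
    · -- L1 = {r0}
      have hL1' : L1.card = 1 := by omega
      obtain ⟨r0, hr0⟩ := Finset.card_eq_one.1 hL1'
      have hr0L1 : r0 ∈ L1 := hr0 ▸ Finset.mem_singleton_self r0
      have hr0Rf : r0 ∈ Rf := by
        have := hL1eq ▸ hr0L1
        exact (Finset.mem_sdiff.1 this).1
      have hr0nch : r0 ∉ childs M1 := by
        have := hL1eq ▸ hr0L1
        exact (Finset.mem_sdiff.1 this).2
      -- choose p0
      have hCr0 : (C r0).Nonempty := by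
        rw [← Finset.card_pos]
        by_contra hc
        push_neg at hc
        have : (C r0).card = 0 := by omega
        have h0 : ((C r0).card : ℝ) = 0 := by exact_mod_cast this
        have := hCcard r0 hr0Rf
        nlinarith [hquarter, hn19]
      obtain ⟨p0, hp0⟩ := hCr0
      have hp0Nf : p0 ∈ Nf := hCsub _ hp0
      have hp0r0 : H.Adj r0 p0 := by
        have := hp0
        rw [hC, Finset.mem_inter, SimpleGraph.mem_neighborFinset] at this
        exact this.1
      -- choose u0
      have hM1card : (M1.card : ℝ) ≤ ((1/3 + α') * n) / 2 := by
        have : 2 * M1.card ≤ Rf.card := by omega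
        have : (2 * M1.card : ℝ) ≤ (Rf.card : ℝ) := by exact_mod_cast this
        push_cast at this
        linarith [hRub]
      have hp0Nbig : 2*D - (n:ℝ) ≤ ((H.neighborFinset p0 ∩ Nf).card : ℝ) := by
        have hsplit : (H.neighborFinset p0 ∩ Nf).card + (H.neighborFinset p0 \ Nf).card
            = (H.neighborFinset p0).card := Finset.card_inter_add_card_sdiff _ _
        have hsub : H.neighborFinset p0 \ Nf ⊆ Finset.univ \ Nf := by
          intro u hu
          exact Finset.mem_sdiff.2 ⟨Finset.mem_univ _, (Finset.mem_sdiff.1 hu).2⟩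
        have hcard : (Finset.univ \ Nf).card = n - Nf.card := by
          rw [Finset.card_sdiff_of_subset (Finset.subset_univ _), Finset.card_univ]
        have h3 := Finset.card_le_card hsub
        have hNfn : Nf.card ≤ n := by
          rw [hn]; exact Finset.card_le_univ _
        have h4 : ((H.neighborFinset p0 \ Nf).card : ℝ) ≤ (n : ℝ) - Nf.card := by
          rw [hcard] at h3
          have := (Nat.cast_le (α := ℝ)).2 h3
          rwa [Nat.cast_sub hNfn] at this
        have h5 : ((H.neighborFinset p0 ∩ Nf).card : ℝ) + ((H.neighborFinset p0 \ Nf).card : ℝ)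
            = ((H.neighborFinset p0).card : ℝ) := by exact_mod_cast hsplit
        have := hdeg p0
        linarith [hNfD]
      have hUne : ((H.neighborFinset p0 ∩ Nf) \ insert p0 (M1.image Prod.fst)).Nonempty := by
        rw [← Finset.card_pos]
        by_contra hc
        push_neg at hc
        have hc0 : ((H.neighborFinset p0 ∩ Nf) \ insert p0 (M1.image Prod.fst)).card = 0 := by
          omega
        have hsplit := Finset.card_sdiff_add_card_inter
          (H.neighborFinset p0 ∩ Nf) (insert p0 (M1.image Prod.fst))
        have hins : (insert p0 (M1.image Prod.fst)).card ≤ 1 + M1.card := by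
          have h1 := Finset.card_insert_le p0 (M1.image Prod.fst)
          have h2 := Finset.card_image_le (f := Prod.fst) (s := M1)
          omega
        have hle : (H.neighborFinset p0 ∩ Nf).card ≤ 1 + M1.card := by
          have h6 : ((H.neighborFinset p0 ∩ Nf) ∩ insert p0 (M1.image Prod.fst)).card
              ≤ (insert p0 (M1.image Prod.fst)).card :=
            Finset.card_le_card Finset.inter_subset_right
          omega
        have : ((H.neighborFinset p0 ∩ Nf).card : ℝ) ≤ 1 + (M1.card : ℝ) := by
          exact_mod_cast hle
        rw [hD] at *
        nlinarith [hM1card, hp0Nbig, hn19, hα24]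
      obtain ⟨u0, hu0⟩ := hUne
      rw [Finset.mem_sdiff, Finset.mem_inter] at hu0
      have hu0Nf : u0 ∈ Nf := hu0.1.2
      have hu0adj : H.Adj p0 u0 := by
        have := hu0.1.1
        rwa [SimpleGraph.mem_neighborFinset] at this
      have hu0p0 : u0 ≠ p0 := fun h => hu0.2 (Finset.mem_insert.2 (Or.inl h))
      have hu0npar : u0 ∉ M1.image Prod.fst := fun h => hu0.2 (Finset.mem_insert.2 (Or.inr h))
      have hu0nch : u0 ∉ childs M1 := fun h => hNfRf hu0Nf (hch1 h)
      have hr0u0 : r0 ≠ u0 := fun h => hNfRf hu0Nf (h ▸ hr0Rf)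
      have hnewK : (p0, r0, u0) ∉ M1 := fun h => hr0nch (mem_childs.2 ⟨_, h, Or.inl rfl⟩)
      have hchK : childs (insert (p0, r0, u0) M1) = insert r0 (insert u0 (childs M1)) := by
        unfold childs
        rw [Finset.biUnion_insert]
        ext x
        simp only [Finset.mem_union, Finset.mem_insert, Finset.mem_singleton]
        tauto
      have hparNf1 : ∀ t ∈ M1, t.1 ∈ Nf → t.1 ∉ childs M1 →
          t.1 ∉ childs (insert (p0, r0, u0) M1) := by
        intro t ht htNf hnc
        rw [hchK]
        intro hc
        rcases Finset.mem_insert.1 hc with h | hc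
        · exact hNfRf htNf (h.symm ▸ hr0Rf)
        · rcases Finset.mem_insert.1 hc with h | hc
          · exact hu0npar (Finset.mem_image.2 ⟨t, ht, h⟩)
          · exact hnc hc
      refine ⟨insert (p0, r0, u0) M1, ?_, ?_, ?_, ?_, ?_, ?_, ?_⟩
      · intro t ht
        rcases Finset.mem_insert.1 ht with rfl | h
        · exact ⟨hp0r0.symm, hu0adj, hr0u0⟩
        · exact hadj1 t h
      · intro t ht t' ht' x hx hx'
        rcases Finset.mem_insert.1 ht with rfl | h <;>
          rcases Finset.mem_insert.1 ht' with rfl | h'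
        · rfl
        · exfalso
          simp only at hx
          rcases hx with rfl | rfl
          · exact hr0nch (mem_childs.2 ⟨t', h', hx'⟩)
          · exact hu0nch (mem_childs.2 ⟨t', h', hx'⟩)
        · exfalso
          simp only at hx'
          rcases hx' with rfl | rfl
          · exact hr0nch (mem_childs.2 ⟨t, h, hx⟩)
          · exact hu0nch (mem_childs.2 ⟨t, h, hx⟩)
        · exact huniq1 t h t' h' x hx hx'
      · rw [hchK]
        intro hc
        rcases Finset.mem_insert.1 hc with h | hc
        · exact hvRRf (h ▸ hr0Rf)
        · rcases Finset.mem_insert.1 hc with h | hc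
          · exact hvRNf (h ▸ hu0Nf)
          · exact hvRRf (hch1 hc)
      · intro v h1 h2
        have hvRf := hcovRf v h1 h2
        rw [hchK]
        by_cases hv : v ∈ childs M1
        · exact Finset.mem_insert.2 (Or.inr (Finset.mem_insert.2 (Or.inr hv)))
        · have : v ∈ L1 := hL1eq ▸ Finset.mem_sdiff.2 ⟨hvRf, hv⟩
          rw [hr0] at this
          exact Finset.mem_insert.2 (Or.inl (Finset.mem_singleton.1 this))
      · intro t ht
        rcases Finset.mem_insert.1 ht with rfl | h
        · refine Or.inl ⟨hAdjNf hp0Nf, ?_⟩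
          rw [hchK]
          intro hc
          rcases Finset.mem_insert.1 hc with h | hc
          · exact hNfRf (h ▸ hp0Nf) hr0Rf
          · rcases Finset.mem_insert.1 hc with h | hc
            · exact hu0p0 h.symm
            · exact hNfRf hp0Nf (hch1 hc)
        · rcases hdepth1 t h with ⟨h1, h2⟩ | ⟨t', ht', hx, h1, h2⟩
          · exact Or.inl ⟨hAdjNf h1, hparNf1 t h h1 h2⟩
          · exact Or.inr ⟨t', Finset.mem_insert_of_mem ht', hx, hAdjNf h1, hparNf1 t' ht' h1 h2⟩
      · have hsubu : Nf ∩ childs (insert (p0, r0, u0) M1) ⊆ {u0} := by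
          intro x hx
          rw [Finset.mem_inter, hchK] at hx
          obtain ⟨hxNf, hxch⟩ := hx
          rcases Finset.mem_insert.1 hxch with h | hc
          · exact absurd (h ▸ hr0Rf) (fun hh => hNfRf hxNf hh)
          · rcases Finset.mem_insert.1 hc with h | hc
            · exact Finset.mem_singleton.2 h
            · exact absurd (hch1 hc) (fun hh => hNfRf hxNf hh)
        have := Finset.card_le_card hsubu
        simpa using this
      · rw [Finset.card_insert_of_notMem hnewK]
        omega

  have hNf4 : 4 ≤ Nf.card := by
    have : (4:ℝ) ≤ (Nf.card : ℝ) := by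
      rw [hD] at hNfD
      nlinarith [hn19, hα24]
    exact_mod_cast this
  obtain ⟨T, hTle, hTtree, hTdeg2, hTvR, hTS⟩ :=
    master (H := H) (vR := vR) (K := K) hadjK huniqK hvRK hdepthK hcovK hNcK hNf4
  refine ⟨T, hTle, hTtree, hTdeg2, ?_, ?_⟩
  · have h1 : (Nf.card : ℝ) ≤ ((T.neighborSet vR).ncard : ℝ) + 1 := by exact_mod_cast hTvR
    rw [hD] at hNfD
    linarith
  · have h1 : (({v : V | 2 ≤ (T.neighborSet v).ncard}).ncard : ℝ) ≤ 1 + (K.card : ℝ) := by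
      exact_mod_cast hTS
    have h2 : 2 * (K.card : ℝ) ≤ (Rf.card : ℝ) + 1 := by exact_mod_cast hKcard
    linarith [hRub]
end

section
/- Let H be a graph on n vertices with δ(H) ≥ (2/3 − α')n where 0 < α' ≪ 1. Let V₁ ⊆ V(H) with |V₁| ≥ (2/3 − α')n − 1 and |V₁| ≡ n (mod 2), and set V₀ = V(H) − V₁ assumed nonempty. Then there exist two vertices of V₀ having a common neighbor in V₁. -/
/-- Let `H` be a graph on `n` vertices with `δ(H) ≥ (2/3 − α')n`, where `0 < α'` is small
(explicitly `8α' + 6/n < 1/3`).  Let `V₁ ⊆ V(H)` with `|V₁| ≥ (2/3 − α')n − 1` and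
`|V₁| ≡ n (mod 2)`, and suppose `V₀ = V(H) − V₁` is nonempty.  Then there exist two
distinct vertices of `V₀` having a common neighbor in `V₁`. -/
theorem stmt_8 {V : Type*} [Fintype V] (H : SimpleGraph V) (α' : ℝ)
    (hα : 0 < α')
    (hsmall : 8 * α' + 6 / (Fintype.card V : ℝ) < 1 / 3)
    (hδ : ∀ v : V, ((2 : ℝ) / 3 - α') * (Fintype.card V : ℝ) ≤ (H.neighborSet v).ncard)
    (V₁ : Set V)
    (hV₁ : ((2 : ℝ) / 3 - α') * (Fintype.card V : ℝ) - 1 ≤ (V₁.ncard : ℝ))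
    (hpar : V₁.ncard % 2 = Fintype.card V % 2)
    (hV₀ : (V₁ᶜ : Set V).Nonempty) :
    ∃ u v : V, u ∈ V₁ᶜ ∧ v ∈ V₁ᶜ ∧ u ≠ v ∧ ∃ w ∈ V₁, H.Adj u w ∧ H.Adj v w := by
  classical
  by_contra hcon
  push_neg at hcon
  set n := Fintype.card V with hn
  have hn0 : 0 < n := Fintype.card_pos_iff.mpr ⟨hV₀.some⟩
  have hnR : (18:ℝ) < n := by
    have h6 : 6/(n:ℝ) < 1/3 := by linarith
    rw [div_lt_iff₀ (by positivity)] at h6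
    linarith
  have hcard : V₁.ncard + (V₁ᶜ : Set V).ncard = n := by
    rw [Set.ncard_add_ncard_compl V₁, Nat.card_eq_fintype_card]
  set m := (V₁ᶜ : Set V).ncard with hm
  have hm1 : 0 < m := (Set.ncard_pos (Set.toFinite _)).mpr hV₀
  have hm2 : 2 ≤ m := by omega
  -- Finset setup
  set S : Finset V := (V₁ᶜ : Set V).toFinset with hS
  set T : Finset V := V₁.toFinset with hT
  have hScard : S.card = m := (Set.ncard_eq_toFinset_card' _).symm
  have hTcard : T.card = V₁.ncard := (Set.ncard_eq_toFinset_card' _).symm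
  set f : V → Finset V := fun u => T ∩ H.neighborFinset u with hf
  have hdisj : ∀ u ∈ S, ∀ v ∈ S, u ≠ v → Disjoint (f u) (f v) := by
    intro u hu v hv huv
    rw [Finset.disjoint_left]
    intro w hwu hwv
    simp only [hf, Finset.mem_inter, SimpleGraph.mem_neighborFinset, hT,
      Set.mem_toFinset] at hwu hwv
    exact hcon u v (by simpa [hS] using hu) (by simpa [hS] using hv) huv w hwu.1
      hwu.2 hwv.2
  have hsum_le : ∑ u ∈ S, (f u).card ≤ T.card := by
    rw [← Finset.card_biUnion hdisj]
    exact Finset.card_le_card (Finset.biUnion_subset.mpr fun u _ => Finset.inter_subset_left)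
  -- lower bound for each f u
  have hlow : ∀ u ∈ S, ((2:ℝ)/3 - α') * n - (m - 1) ≤ ((f u).card : ℝ) := by
    intro u hu
    have huV0 : u ∈ (V₁ᶜ : Set V) := by simpa [hS] using hu
    have hsub : H.neighborFinset u ⊆ f u ∪ S.erase u := by
      intro w hw
      rw [SimpleGraph.mem_neighborFinset] at hw
      by_cases hwV : w ∈ V₁
      · exact Finset.mem_union_left _ (by
          simp [hf, hT, Set.mem_toFinset, hwV, SimpleGraph.mem_neighborFinset, hw])
      · refine Finset.mem_union_right _ (Finset.mem_erase.mpr ⟨(H.ne_of_adj hw).symm, ?_⟩)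
        simp [hS, Set.mem_toFinset, hwV]
    have hcd : (H.neighborFinset u).card ≤ (f u).card + (m - 1) := by
      calc (H.neighborFinset u).card ≤ (f u ∪ S.erase u).card := Finset.card_le_card hsub
        _ ≤ (f u).card + (S.erase u).card := Finset.card_union_le _ _
        _ = (f u).card + (m - 1) := by rw [Finset.card_erase_of_mem hu, hScard]
    have hdeg : ((2:ℝ)/3 - α') * n ≤ ((H.neighborFinset u).card : ℝ) := by
      have := hδ u
      rwa [Set.ncard_eq_toFinset_card', ← SimpleGraph.neighborFinset_def] at this
    have hcdR : ((H.neighborFinset u).card : ℝ) ≤ ((f u).card : ℝ) + ((m:ℝ) - 1) := by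
      have : ((m:ℝ) - 1) = ((m - 1 : ℕ) : ℝ) := by
        have : 1 ≤ m := hm1
        push_cast [this]
        ring
      rw [this]
      exact_mod_cast hcd
    linarith
  -- sum lower bound
  have hsumR : (m : ℝ) * (((2:ℝ)/3 - α') * n - (m - 1)) ≤ ((∑ u ∈ S, (f u).card : ℕ) : ℝ) := by
    have := Finset.card_nsmul_le_sum S (fun u => ((f u).card : ℝ))
      (((2:ℝ)/3 - α') * n - ((m:ℝ) - 1)) hlow
    rw [hScard, nsmul_eq_mul] at this
    push_cast
    exact this
  have hTR : ((∑ u ∈ S, (f u).card : ℕ) : ℝ) ≤ (V₁.ncard : ℝ) := by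
    exact_mod_cast hTcard ▸ hsum_le
  have hV1m : (V₁.ncard : ℝ) = (n : ℝ) - m := by
    have : (V₁.ncard : ℝ) + (m : ℝ) = n := by exact_mod_cast hcard
    linarith
  have hmub : (m : ℝ) ≤ (n : ℝ) - (((2:ℝ)/3 - α') * n) + 1 := by
    rw [hV1m] at hV₁; linarith
  have hmlb : (2:ℝ) ≤ (m : ℝ) := by exact_mod_cast hm2
  have hsm : 8 * α' * n + 6 < n / 3 := by
    have hnpos : (0:ℝ) < n := by linarith
    have := mul_lt_mul_of_pos_right hsmall hnpos
    rw [add_mul, div_mul_cancel₀] at this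
    · linarith
    · positivity
  have key : (m : ℝ) * (((2:ℝ)/3 - α') * n - (m - 1)) ≤ (n : ℝ) - m := by
    rw [hV1m] at hTR
    linarith
  nlinarith [mul_nonneg (by linarith : (0:ℝ) ≤ (m:ℝ) - 2)
    (by linarith : (0:ℝ) ≤ (n:ℝ) - ((2:ℝ)/3 - α') * n + 1 - m), sq_nonneg ((m:ℝ) - 2), hα.le]
end

section
/- If G is a graph of order n such that d(x) + d(y) ≥ n + 1 for every pair of nonadjacent vertices x, y, then G is Hamiltonian-connected, i.e., between any two distinct vertices there is a Hamiltonian path. -/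
open SimpleGraph Finset List

namespace StmtNine

variable {V : Type*}

lemma split_at_dart {G : SimpleGraph V} {a b : V} (p : G.Walk a b) (d : G.Dart)
    (hd : d ∈ p.darts) :
    ∃ (q : G.Walk a d.fst) (r : G.Walk d.snd b), p = q.append (Walk.cons d.adj r) := by
  induction p with
  | nil => simp at hd
  | @cons u w b h p ih =>
    rw [Walk.darts_cons, List.mem_cons] at hd
    rcases hd with hd | hd
    · subst hd
      exact ⟨Walk.nil, p, rfl⟩
    · obtain ⟨q, r, rfl⟩ := ih hd
      exact ⟨Walk.cons h q, r, rfl⟩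

lemma crossing {G : SimpleGraph V} [Fintype V] [DecidableEq V] [DecidableRel G.Adj]
    {a b : V} (hab : a ≠ b) (p : G.Walk a b) (hp : p.IsHamiltonian)
    (hdeg : Fintype.card V ≤ G.degree a + G.degree b) (hcard : 3 ≤ Fintype.card V) :
    G.IsHamiltonian := by
  have hnd : p.support.Nodup := hp.isPath.support_nodup
  have hdnd : p.darts.Nodup := Walk.darts_nodup_of_support_nodup hnd
  have hsndnd : (p.darts.map (·.snd)).Nodup := by
    rw [Walk.map_snd_darts]; exact hnd.sublist (List.tail_sublist _)
  have hfstnd : (p.darts.map (·.fst)).Nodup := by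
    rw [Walk.map_fst_darts]; exact hnd.sublist (List.dropLast_sublist _)
  set D : Finset G.Dart := p.darts.toFinset with hDdef
  have hD : D.card = Fintype.card V - 1 := by
    rw [List.toFinset_card_of_nodup hdnd, Walk.length_darts, hp.length_eq]
  set A : Finset G.Dart := D.filter (fun d => G.Adj a d.snd) with hAdef
  set B : Finset G.Dart := D.filter (fun d => G.Adj b d.fst) with hBdef
  have hA : A.card = G.degree a := by
    apply Finset.card_bij (fun d _ => d.snd)
    · intro d hd
      rw [mem_neighborFinset]
      exact (Finset.mem_filter.mp hd).2
    · intro d₁ hd₁ d₂ hd₂ hsnd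
      exact List.inj_on_of_nodup_map hsndnd
        (List.mem_toFinset.mp (Finset.mem_filter.mp hd₁).1)
        (List.mem_toFinset.mp (Finset.mem_filter.mp hd₂).1) hsnd
    · intro z hz
      rw [mem_neighborFinset] at hz
      have hz1 : z ∈ p.support := hp.mem_support z
      have hz2 : z ≠ a := fun h => G.irrefl (h ▸ hz)
      have : z ∈ p.support.tail := by
        rw [p.support_eq_cons] at hz1
        rcases List.mem_cons.mp hz1 with h | h
        · exact absurd h hz2
        · exact h
      rw [← Walk.map_snd_darts] at this
      obtain ⟨d, hd, hdz⟩ := List.mem_map.mp this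
      refine ⟨d, Finset.mem_filter.mpr ⟨List.mem_toFinset.mpr hd, ?_⟩, hdz⟩
      rw [hdz]; exact hz
  have hB : B.card = G.degree b := by
    apply Finset.card_bij (fun d _ => d.fst)
    · intro d hd
      rw [mem_neighborFinset]
      exact (Finset.mem_filter.mp hd).2
    · intro d₁ hd₁ d₂ hd₂ hfst
      exact List.inj_on_of_nodup_map hfstnd
        (List.mem_toFinset.mp (Finset.mem_filter.mp hd₁).1)
        (List.mem_toFinset.mp (Finset.mem_filter.mp hd₂).1) hfst
    · intro z hz
      rw [mem_neighborFinset] at hz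
      have hz1 : z ∈ p.support := hp.mem_support z
      have hz2 : z ≠ b := fun h => G.irrefl (h ▸ hz)
      have : z ∈ p.darts.map (·.fst) := by
        rw [← Walk.map_fst_darts_append] at hz1
        rcases List.mem_append.mp hz1 with h | h
        · exact h
        · exact absurd (List.mem_singleton.mp h) hz2
      obtain ⟨d, hd, hdz⟩ := List.mem_map.mp this
      refine ⟨d, Finset.mem_filter.mpr ⟨List.mem_toFinset.mpr hd, ?_⟩, hdz⟩
      rw [hdz]; exact hz
  have hABD : A ∪ B ⊆ D := Finset.union_subset (Finset.filter_subset _ _) (Finset.filter_subset _ _)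
  have hinter : (A ∩ B).Nonempty := by
    rw [← Finset.card_pos]
    have h1 : (A ∪ B).card + (A ∩ B).card = A.card + B.card :=
      Finset.card_union_add_card_inter A B
    have h2 : (A ∪ B).card ≤ D.card := Finset.card_le_card hABD
    omega
  obtain ⟨d, hdAB⟩ := hinter
  have hdmem : d ∈ p.darts := List.mem_toFinset.mp
    (Finset.mem_filter.mp (Finset.mem_inter.mp hdAB).1).1
  have hay : G.Adj a d.snd := (Finset.mem_filter.mp (Finset.mem_inter.mp hdAB).1).2
  have hbx : G.Adj b d.fst := (Finset.mem_filter.mp (Finset.mem_inter.mp hdAB).2).2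
  obtain ⟨q, r, rfl⟩ := split_at_dart p d hdmem
  have hsupp : (q.append (Walk.cons d.adj r)).support = q.support ++ r.support := by
    rw [Walk.support_append]; simp
  rw [hsupp] at hnd
  have hdisj : ∀ z, z ∈ q.support → z ∈ r.support → False := by
    intro z h1 h2
    exact (List.disjoint_of_nodup_append hnd) h1 h2
  set W0 : G.Walk a d.snd := q.append (Walk.cons hbx.symm r.reverse) with hW0def
  have hW0supp : W0.support = q.support ++ r.support.reverse := by
    rw [hW0def, Walk.support_append]; simp [Walk.support_reverse]
  have hW0path : W0.IsPath := by
    rw [Walk.isPath_def, hW0supp]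
    rw [List.nodup_append] at hnd ⊢
    refine ⟨hnd.1, List.nodup_reverse.mpr hnd.2.1, ?_⟩
    intro z hz z' hz' hzz
    exact hnd.2.2 z hz z' (List.mem_reverse.mp hz') hzz
  have hW0edge : s(d.snd, a) ∉ W0.edges := by
    intro hmem
    rw [hW0def, Walk.edges_append, Walk.edges_cons, List.mem_append, List.mem_cons] at hmem
    rcases hmem with h | h | h
    · exact hdisj d.snd (Walk.fst_mem_support_of_mem_edges q h) (Walk.start_mem_support r)
    · rw [Sym2.eq_iff] at h
      rcases h with ⟨h1, h2⟩ | ⟨h1, h2⟩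
      · exact hab h2
      · -- d.snd = b, a = d.fst : then q and r are nil, p has length 1
        have hq0 : q.length = 0 := by
          have : (q.copy rfl h2.symm).IsPath := by
            rw [Walk.isPath_def, Walk.support_copy]
            exact hnd.sublist (List.sublist_append_left _ _)
          rw [Walk.isPath_iff_eq_nil] at this
          have := congrArg Walk.length this
          simpa using this
        have hr0 : r.length = 0 := by
          have : (r.copy h1 rfl).IsPath := by
            rw [Walk.isPath_def, Walk.support_copy]
            exact hnd.sublist (List.sublist_append_right _ _)
          rw [Walk.isPath_iff_eq_nil] at this
          have := congrArg Walk.length this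
          simpa using this
        have hlen : (q.append (Walk.cons d.adj r)).length = Fintype.card V - 1 :=
          hp.length_eq
        rw [Walk.length_append, Walk.length_cons, hq0, hr0] at hlen
        omega
    · rw [Walk.edges_reverse, List.mem_reverse] at h
      exact hdisj a (Walk.start_mem_support q) (Walk.snd_mem_support_of_mem_edges r h)
  have hcyc : (Walk.cons hay.symm W0).IsCycle :=
    (Walk.cons_isCycle_iff W0 hay.symm).mpr ⟨hW0path, hW0edge⟩
  intro _
  refine ⟨d.snd, Walk.cons hay.symm W0, ?_⟩
  rw [Walk.isHamiltonianCycle_iff_isCycle_and_support_count_tail_eq_one]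
  refine ⟨hcyc, fun z => ?_⟩
  rw [Walk.support_cons, List.tail_cons, hW0supp, List.count_append, List.count_reverse]
  have := hp z
  rw [hsupp, List.count_append] at this
  exact this


lemma path_of_hamCycle_dart {G : SimpleGraph V} [DecidableEq V] {w : V} (c : G.Walk w w)
    (hc : c.IsHamiltonianCycle) (d : G.Dart) (hd : d ∈ c.darts) :
    ∃ p : G.Walk d.snd d.fst, p.IsHamiltonian ∧ d.edge ∉ p.edges ∧ ∀ e ∈ p.edges, e ∈ c.edges := by
  obtain ⟨q, r, hcqr⟩ := split_at_dart c d hd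
  have hedges : c.edges = q.edges ++ (s(d.fst, d.snd) :: r.edges) := by
    rw [hcqr, Walk.edges_append, Walk.edges_cons]
  have hnd : c.edges.Nodup := hc.isCycle.isTrail.edges_nodup
  rw [hedges] at hnd
  rw [List.nodup_append] at hnd
  have hdq : s(d.fst, d.snd) ∉ q.edges := fun h => hnd.2.2 _ h _ List.mem_cons_self rfl
  have hdr : s(d.fst, d.snd) ∉ r.edges := (List.nodup_cons.mp hnd.2.1).1
  have htail : ∀ z, c.support.tail.count z = 1 :=
    (Walk.isHamiltonianCycle_iff_isCycle_and_support_count_tail_eq_one.mp hc).2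
  have hsupp : c.support.tail = q.support.tail ++ r.support := by
    rw [hcqr, Walk.support_append]
    rw [q.support_eq_cons]
    simp
  have hde : d.edge = s(d.fst, d.snd) := rfl
  refine ⟨r.append q, ?_, ?_, ?_⟩
  · intro z
    rw [Walk.support_append, List.count_append]
    have := htail z
    rw [hsupp, List.count_append] at this
    omega
  · rw [hde, Walk.edges_append, List.mem_append]
    rintro (h | h)
    · exact hdr h
    · exact hdq h
  · intro e he
    rw [Walk.edges_append, List.mem_append] at he
    rw [hedges, List.mem_append, List.mem_cons]
    tauto


lemma degree_mono {G₁ G₂ : SimpleGraph V} [Fintype V] (h : G₁ ≤ G₂) (x : V)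
    [DecidableRel G₁.Adj] [DecidableRel G₂.Adj] : G₁.degree x ≤ G₂.degree x := by
  apply Finset.card_le_card
  intro z hz
  rw [mem_neighborFinset] at hz ⊢
  exact h hz

lemma hamCycle_transfer [DecidableEq V] {G₁ G₂ : SimpleGraph V} {w : V} (c : G₁.Walk w w)
    (hc : c.IsHamiltonianCycle) (he : ∀ e ∈ c.edges, e ∈ G₂.edgeSet) :
    (c.transfer G₂ he).IsHamiltonianCycle := by
  rw [Walk.isHamiltonianCycle_iff_isCycle_and_support_count_tail_eq_one] at hc ⊢
  refine ⟨hc.1.transfer he, fun z => ?_⟩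
  rw [Walk.support_transfer]
  exact hc.2 z

lemma bc {W : Type*} [Fintype W] [DecidableEq W] (H K : SimpleGraph W)
    [DecidableRel H.Adj]
    (hcard : 3 ≤ Fintype.card W)
    (hHK : H ≤ K) (hK : K.IsHamiltonian)
    (hdeg : ∀ x y : W, x ≠ y → ¬ H.Adj x y → K.Adj x y →
      Fintype.card W ≤ H.degree x + H.degree y) :
    H.IsHamiltonian := by
  classical
  have main : ∀ (k : ℕ) (L : SimpleGraph W) (_ : H ≤ L) (_ : L ≤ K)
      (_ : (K.edgeFinset \ L.edgeFinset).card = k), L.IsHamiltonian := by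
    intro k
    induction k with
    | zero =>
      intro L hHL hLK hc0
      have : K.edgeFinset ⊆ L.edgeFinset := by
        rw [← Finset.sdiff_eq_empty_iff_subset, ← Finset.card_eq_zero]
        exact hc0
      have hKL : K ≤ L := edgeFinset_subset_edgeFinset.mp this
      have : L = K := le_antisymm hLK hKL
      rw [this]; exact hK
    | succ n ih =>
      intro L hHL hLK hcn
      have hne : (K.edgeFinset \ L.edgeFinset).Nonempty := by
        rw [← Finset.card_pos, hcn]; omega
      obtain ⟨e, he⟩ := hne
      induction e using Sym2.ind with
      | _ x y =>
      rw [Finset.mem_sdiff, mem_edgeFinset, mem_edgeFinset] at he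
      have hKxy : K.Adj x y := he.1
      have hLxy : ¬ L.Adj x y := fun h => he.2 h
      have hxy : x ≠ y := hKxy.ne
      set L' : SimpleGraph W := L ⊔ SimpleGraph.fromEdgeSet {s(x, y)} with hL'def
      have hLL' : L ≤ L' := le_sup_left
      have hL'K : L' ≤ K := by
        apply sup_le hLK
        intro a b hab
        rw [fromEdgeSet_adj, Set.mem_singleton_iff, Sym2.eq_iff] at hab
        rcases hab.1 with ⟨rfl, rfl⟩ | ⟨rfl, rfl⟩
        · exact hKxy
        · exact hKxy.symm
      have hL'adj : ∀ a b : W, L'.Adj a b ↔ L.Adj a b ∨ (s(a,b) = s(x,y) ∧ a ≠ b) := by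
        intro a b
        rw [hL'def, sup_adj, fromEdgeSet_adj, Set.mem_singleton_iff]
      have hL'edge : ∀ (inst : Fintype L'.edgeSet),
          @edgeFinset W L' inst = insert s(x,y) L.edgeFinset := by
        intro inst
        ext e
        induction e using Sym2.ind with
        | _ a b =>
        rw [Finset.mem_insert, mem_edgeFinset, mem_edgeFinset, mem_edgeSet, mem_edgeSet,
          hL'adj]
        constructor
        · rintro (h | ⟨h, _⟩)
          · exact Or.inr h
          · exact Or.inl h
        · rintro (h | h)
          · have hne : a ≠ b := by
              rw [Sym2.eq_iff] at h
              rcases h with ⟨rfl, rfl⟩ | ⟨rfl, rfl⟩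
              exacts [hxy, hxy.symm]
            exact Or.inr ⟨h, hne⟩
          · exact Or.inl h
      have hmemKL : s(x,y) ∈ K.edgeFinset \ L.edgeFinset := by
        rw [Finset.mem_sdiff, mem_edgeFinset, mem_edgeFinset]
        exact he
      have hL'ham : L'.IsHamiltonian := by
        apply ih L' (le_trans hHL hLL') hL'K
        rw [hL'edge _, Finset.sdiff_insert, Finset.card_erase_of_mem hmemKL, hcn]
        omega
      obtain ⟨w, c, hc⟩ := hL'ham (by omega)
      by_cases hmem : s(x, y) ∈ c.edges
      · -- extract hamiltonian path and use crossing lemma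
        obtain ⟨d, hd, hde⟩ := by
          rw [Walk.edges] at hmem
          exact List.mem_map.mp hmem
        obtain ⟨p, hp, hpe, hpsub⟩ := path_of_hamCycle_dart c hc d hd
        have hpL : ∀ e ∈ p.edges, e ∈ L.edgeSet := by
          intro e hep
          have he1 : e ∈ L'.edgeSet := c.edges_subset_edgeSet (hpsub e hep)
          induction e using Sym2.ind with
          | _ a b =>
          rw [mem_edgeSet] at he1 ⊢
          rw [hL'adj] at he1
          rcases he1 with h | ⟨h, _⟩
          · exact h
          · exact absurd hep (by rw [h, ← hde]; exact hpe)
        have hfs : (d.fst = x ∧ d.snd = y) ∨ (d.fst = y ∧ d.snd = x) := by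
          rw [← Sym2.eq_iff]
          exact hde
        have hHadj : ¬ H.Adj x y := fun hh => hLxy (hHL hh)
        have hH : Fintype.card W ≤ H.degree d.snd + H.degree d.fst := by
          rcases hfs with ⟨h1, h2⟩ | ⟨h1, h2⟩
          · rw [h1, h2, add_comm]
            exact hdeg x y hxy hHadj hKxy
          · rw [h1, h2]
            exact hdeg x y hxy hHadj hKxy
        have hdegL : Fintype.card W ≤ L.degree d.snd + L.degree d.fst :=
          le_trans hH (add_le_add (degree_mono hHL _) (degree_mono hHL _))
        have hp' : (p.transfer L hpL).IsHamiltonian := by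
          intro z
          rw [Walk.support_transfer]
          exact hp z
        exact crossing d.adj.ne.symm (p.transfer L hpL) hp' hdegL hcard
      · have hcL : ∀ e ∈ c.edges, e ∈ L.edgeSet := by
          intro e hec
          have he1 : e ∈ L'.edgeSet := c.edges_subset_edgeSet hec
          induction e using Sym2.ind with
          | _ a b =>
          rw [mem_edgeSet] at he1 ⊢
          rw [hL'adj] at he1
          rcases he1 with h | ⟨h, _⟩
          · exact h
          · exact absurd (h ▸ hec) hmem
        exact fun _ => ⟨w, c.transfer L hcL, hamCycle_transfer c hc hcL⟩
  exact main _ H le_rfl hHK rfl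


def auxGraph (G : SimpleGraph V) (u v : V) : SimpleGraph (Option V) where
  Adj a b := match a, b with
    | some a, some b => G.Adj a b
    | some a, none => a = u ∨ a = v
    | none, some b => b = u ∨ b = v
    | none, none => False
  symm := by
    constructor
    rintro (_ | a) (_ | b) h
    · exact h
    · exact h
    · exact h
    · exact G.symm.symm _ _ h
  loopless := by
    constructor
    rintro (_ | a) h
    · exact h
    · exact G.loopless.irrefl a h

@[simp] lemma auxGraph_adj_some_some {G : SimpleGraph V} {u v a b : V} :
    (auxGraph G u v).Adj (some a) (some b) ↔ G.Adj a b := Iff.rfl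

@[simp] lemma auxGraph_adj_none_some {G : SimpleGraph V} {u v b : V} :
    (auxGraph G u v).Adj none (some b) ↔ b = u ∨ b = v := Iff.rfl

@[simp] lemma auxGraph_adj_some_none {G : SimpleGraph V} {u v a : V} :
    (auxGraph G u v).Adj (some a) none ↔ a = u ∨ a = v := Iff.rfl

@[simp] lemma auxGraph_adj_none_none {G : SimpleGraph V} {u v : V} :
    ¬ (auxGraph G u v).Adj none none := fun h => h

lemma auxGraph_le {G₁ G₂ : SimpleGraph V} (h : G₁ ≤ G₂) (u v : V) :
    auxGraph G₁ u v ≤ auxGraph G₂ u v := by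
  rintro (_ | a) (_ | b) hab
  · exact hab
  · exact hab
  · exact hab
  · exact h hab

lemma auxGraph_degree_le {G : SimpleGraph V} [Fintype V] [DecidableEq V]
    [DecidableRel G.Adj] (u v x : V) [DecidableRel (auxGraph G u v).Adj] :
    G.degree x ≤ (auxGraph G u v).degree (some x) := by
  have : (G.neighborFinset x).image some ⊆ (auxGraph G u v).neighborFinset (some x) := by
    intro z hz
    rw [Finset.mem_image] at hz
    obtain ⟨a, ha, rfl⟩ := hz
    rw [mem_neighborFinset] at ha ⊢
    exact ha
  calc G.degree x = ((G.neighborFinset x).image some).card :=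
        (Finset.card_image_of_injective _ (Option.some_injective V)).symm
    _ ≤ _ := Finset.card_le_card this

lemma walk_through_list (G : SimpleGraph V) (u v : V) :
    ∀ (l : List V) (x y : V), x ∉ l → y ∉ l → x ≠ y → l.Nodup →
    ∃ (w : (auxGraph (⊤ : SimpleGraph V) u v).Walk (some x) (some y)),
      w.support = (x :: (l ++ [y])).map some := by
  intro l
  induction l with
  | nil =>
    intro x y _ _ hxy _
    exact ⟨Walk.cons (by simpa using hxy) Walk.nil, by simp⟩
  | cons z l ih =>
    intro x y hx hy hxy hnd
    rw [List.mem_cons, not_or] at hx hy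
    rw [List.nodup_cons] at hnd
    obtain ⟨w, hw⟩ := ih z y hnd.1 hy.2 (fun h => hy.1 h.symm) hnd.2
    refine ⟨Walk.cons (by simpa using (hx.1 : ¬ x = z)) w, ?_⟩
    rw [Walk.support_cons, hw]
    rfl

lemma auxGraph_top_hamiltonian [Fintype V] [DecidableEq V] {u v : V} (huv : u ≠ v) :
    (auxGraph (⊤ : SimpleGraph V) u v).IsHamiltonian := by
  classical
  set s : Finset V := (Finset.univ.erase u).erase v with hsdef
  have hus : u ∉ s := fun h => (Finset.mem_erase.mp (Finset.mem_erase.mp h).2).1 rfl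
  have hvs : v ∉ s := fun h => (Finset.mem_erase.mp h).1 rfl
  set l := s.toList with hldef
  have hlnd : l.Nodup := Finset.nodup_toList s
  have hul : u ∉ l := fun h => hus (Finset.mem_toList.mp h)
  have hvl : v ∉ l := fun h => hvs (Finset.mem_toList.mp h)
  have hmem : ∀ a : V, a ∈ u :: (l ++ [v]) := by
    intro a
    rw [List.mem_cons, List.mem_append, List.mem_singleton]
    by_cases h1 : a = u
    · exact Or.inl h1
    by_cases h2 : a = v
    · exact Or.inr (Or.inr h2)
    · refine Or.inr (Or.inl ?_)
      rw [hldef, Finset.mem_toList, hsdef]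
      exact Finset.mem_erase.mpr ⟨h2, Finset.mem_erase.mpr ⟨h1, Finset.mem_univ a⟩⟩
  have hlistnd : (u :: (l ++ [v])).Nodup := by
    rw [List.nodup_cons, List.nodup_append]
    refine ⟨?_, hlnd, by simp, ?_⟩
    · rw [List.mem_append, List.mem_singleton]
      rintro (h | h)
      · exact hul h
      · exact huv h
    · intro a ha b hb hab
      rw [List.mem_singleton] at hb
      subst hb
      subst hab
      exact hvl ha
  obtain ⟨w, hw⟩ := walk_through_list ⊤ u v l u v hul hvl huv hlnd
  set inner : (auxGraph (⊤ : SimpleGraph V) u v).Walk (some u) none :=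
    w.append (Walk.cons (by simp) Walk.nil) with hinnerdef
  have hinnersupp : inner.support = (u :: (l ++ [v])).map some ++ [none] := by
    rw [hinnerdef, Walk.support_append, hw]
    rfl
  have hinnerpath : inner.IsPath := by
    rw [Walk.isPath_def, hinnersupp]
    rw [List.nodup_append]
    refine ⟨hlistnd.map (Option.some_injective V), by simp, ?_⟩
    intro a ha b hb hab
    rw [List.mem_singleton] at hb
    subst hb
    subst hab
    rw [List.mem_map] at ha
    obtain ⟨b, _, hb⟩ := ha
    cases hb
  have hinneredge : s(none, some u) ∉ inner.edges := by
    intro hmm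
    rw [hinnerdef, Walk.edges_append, List.mem_append] at hmm
    rcases hmm with h | h
    · have := Walk.fst_mem_support_of_mem_edges w h
      rw [hw, List.mem_map] at this
      obtain ⟨b, _, hb⟩ := this
      cases hb
    · simp only [Walk.edges_cons, Walk.edges_nil, List.mem_singleton] at h
      rw [Sym2.eq_iff] at h
      rcases h with ⟨h1, _⟩ | ⟨_, h2⟩
      · cases h1
      · exact huv (Option.some_injective V h2)
  have hadj : (auxGraph (⊤ : SimpleGraph V) u v).Adj none (some u) := by simp
  intro _
  refine ⟨none, Walk.cons hadj inner, ?_⟩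
  rw [Walk.isHamiltonianCycle_iff_isCycle_and_support_count_tail_eq_one]
  constructor
  · exact (Walk.cons_isCycle_iff inner hadj).mpr ⟨hinnerpath, hinneredge⟩
  · intro z
    rw [Walk.support_cons, List.tail_cons]
    apply @List.count_eq_one_of_mem _ instBEqOfDecidableEq _ _ _ (hinnerpath.support_nodup)
    rw [hinnersupp]
    rw [List.mem_append]
    rcases z with _ | a
    · exact Or.inr (List.mem_singleton.mpr rfl)
    · exact Or.inl (List.mem_map_of_mem (f := some) (hmem a))


lemma walk_to_base {G : SimpleGraph V} {u v : V} :
    ∀ {s t : Option V} (w : (auxGraph G u v).Walk s t) {x y : V},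
      s = some x → t = some y → (none : Option V) ∉ w.support →
      ∃ w' : G.Walk x y, w'.support.map some = w.support := by
  intro s t w
  induction w with
  | nil =>
    intro x y hs ht hn
    subst hs
    obtain rfl : x = y := Option.some_injective V ht
    exact ⟨Walk.nil, by simp⟩
  | @cons s b t hadj w ih =>
    intro x y hs ht hn
    subst hs
    rw [Walk.support_cons, List.mem_cons, not_or] at hn
    cases b with
    | none => exact absurd (Walk.start_mem_support w) hn.2
    | some z =>
      obtain ⟨w', hw'⟩ := ih rfl ht hn.2
      have hGadj : G.Adj x z := hadj
      refine ⟨Walk.cons hGadj w', ?_⟩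
      rw [Walk.support_cons, Walk.support_cons, ← hw']
      rfl

lemma ham_path_of_aux_hamCycle [DecidableEq V] {G : SimpleGraph V} {u v : V} (huv : u ≠ v)
    (c : (auxGraph G u v).Walk none none) (hc : c.IsHamiltonianCycle) :
    ∃ p : G.Walk u v, p.IsHamiltonian := by
  letI : BEq (Option V) := instBEqOfDecidableEq
  letI : BEq V := instBEqOfDecidableEq
  have hne : ¬ c.Nil := hc.isCycle.not_nil
  obtain ⟨b0, hadj1, q, rfl⟩ := Walk.not_nil_iff.mp hne
  have htail : ∀ z, q.support.count z = 1 := by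
    have h2 := (Walk.isHamiltonianCycle_iff_isCycle_and_support_count_tail_eq_one.mp hc).2
    intro z
    have := h2 z
    rwa [Walk.support_cons, List.tail_cons] at this
  cases b0 with
  | none => exact absurd hadj1 (fun h => h)
  | some a =>
  have haa : a = u ∨ a = v := hadj1
  obtain ⟨b0, hadj2, r, hqr⟩ := Walk.exists_eq_cons_of_ne (by simp) q.reverse
  cases b0 with
  | none => exact absurd hadj2 (fun h => h)
  | some b =>
  have hbb : b = u ∨ b = v := hadj2
  have hq : q = (Walk.cons hadj2 r).reverse := by
    rw [← hqr, Walk.reverse_reverse]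
  have hsupq : q.support = r.support.reverse ++ [none] := by
    rw [hq, Walk.support_reverse, Walk.support_cons, List.reverse_cons]
  have hnr : (none : Option V) ∉ r.support := by
    intro hmm
    have h1 := htail none
    rw [hsupq, List.count_append] at h1
    have h2 : 0 < List.count (none : Option V) r.support.reverse := by
      rw [List.count_pos_iff]
      exact List.mem_reverse.mpr hmm
    have h3 : (0:ℕ) < List.count (none : Option V) [none] := by
      rw [List.count_pos_iff]
      exact List.mem_singleton.mpr rfl
    omega
  have hcount_r : ∀ z : V, r.support.count (some z) = 1 := by
    intro z
    have h1 := htail (some z)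
    rw [hsupq, List.count_append] at h1
    have h3 : List.count (some z) [(none : Option V)] = 0 := by
      rw [List.count_eq_zero]
      simp
    have h4 : List.count (some z) r.support.reverse = List.count (some z) r.support :=
      (List.reverse_perm _).count_eq _
    omega
  obtain ⟨w', hw'⟩ := walk_to_base r rfl rfl hnr
  have hwham : w'.IsHamiltonian := by
    intro z
    have h5 := hcount_r z
    rw [← hw', List.count_map_of_injective _ some (Option.some_injective V)] at h5
    exact h5
  have hba : b ≠ a := by
    intro hba
    subst hba
    have hp := hwham.isPath
    rw [Walk.isPath_iff_eq_nil] at hp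
    have hu := hwham.mem_support u
    have hv := hwham.mem_support v
    rw [hp] at hu hv
    simp only [Walk.support_nil, List.mem_singleton] at hu hv
    exact huv (hu.trans hv.symm)
  rcases haa with rfl | rfl <;> rcases hbb with rfl | rfl
  · exact absurd rfl hba
  · -- a = u, b = v : w' : Walk v u
    refine ⟨w'.reverse, fun z => ?_⟩
    rw [Walk.support_reverse]
    exact ((List.reverse_perm _).count_eq _).trans (hwham z)
  · exact ⟨w', hwham⟩
  · exact absurd rfl hba


end StmtNine

open StmtNine

/-- If `G` is a graph of order `n` with `d(x) + d(y) ≥ n + 1` for every pair of nonadjacent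
vertices `x, y`, then `G` is Hamiltonian-connected: between any two distinct vertices there
is a Hamiltonian path. -/
theorem stmt_9 {V : Type*} [Fintype V] [DecidableEq V] (G : SimpleGraph V)
    [DecidableRel G.Adj]
    (h : ∀ x y : V, x ≠ y → ¬ G.Adj x y →
      Fintype.card V + 1 ≤ G.degree x + G.degree y) :
    ∀ u v : V, u ≠ v → ∃ p : G.Walk u v, p.IsHamiltonian := by
  intro u v huv
  classical
  letI : BEq (Option V) := instBEqOfDecidableEq
  have hn2 : 2 ≤ Fintype.card V := Fintype.one_lt_card_iff_nontrivial.mpr ⟨u, v, huv⟩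
  have hcardo : Fintype.card (Option V) = Fintype.card V + 1 := Fintype.card_option
  have hcard3 : 3 ≤ Fintype.card (Option V) := by omega
  set H := auxGraph G u v with hHdef
  letI : DecidableRel H.Adj := Classical.decRel _
  set K := auxGraph (⊤ : SimpleGraph V) u v with hKdef
  have hHK : H ≤ K := auxGraph_le le_top u v
  have hK : K.IsHamiltonian := auxGraph_top_hamiltonian huv
  have hdeg : ∀ x y : Option V, x ≠ y → ¬ H.Adj x y → K.Adj x y →
      Fintype.card (Option V) ≤ H.degree x + H.degree y := by
    rintro (_ | a) (_ | b) hne hHadj hKadj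
    · exact absurd rfl hne
    · exact absurd hKadj hHadj
    · exact absurd hKadj hHadj
    · have hab : a ≠ b := by
        intro hh
        exact hne (by rw [hh])
      have hnadj : ¬ G.Adj a b := hHadj
      have hsum := h a b hab hnadj
      rw [hcardo]
      calc Fintype.card V + 1 ≤ G.degree a + G.degree b := hsum
        _ ≤ H.degree (some a) + H.degree (some b) :=
          add_le_add (auxGraph_degree_le u v a) (auxGraph_degree_le u v b)
  have hHham := bc H K hcard3 hHK hK hdeg
  obtain ⟨w0, c0, hc0⟩ := hHham (by omega)
  have hnonemem : (none : Option V) ∈ c0.support := hc0.mem_support none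
  have hcrot : (c0.rotate none hnonemem).IsHamiltonianCycle := by
    rw [Walk.isHamiltonianCycle_iff_isCycle_and_support_count_tail_eq_one] at hc0 ⊢
    refine ⟨hc0.1.rotate hnonemem, fun z => ?_⟩
    have hrot := Walk.support_rotate c0 none hnonemem
    exact (hrot.perm.count_eq _).trans (hc0.2 z)
  exact ham_path_of_aux_hamCycle huv (c0.rotate none hnonemem) hcrot
end

section
/- Let G be a graph, x, y ∈ V(G), and let G' be obtained from G by adding, for each vertex z ∈ V(G) − {x,y}, a new pendant vertex z' adjacent only to z. Then G has a Hamiltonian path between x and y if and only if G' has a spanning tree with no vertex of degree 2. -/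
/-- The graph `G'` obtained from `G` by adding, for each vertex `z ∈ V(G) − {x,y}`, a new
pendant vertex `z'` adjacent only to `z`. -/
def pendantExt {V : Type*} (G : SimpleGraph V) (x y : V) :
    SimpleGraph (V ⊕ {z : V // z ≠ x ∧ z ≠ y}) :=
  SimpleGraph.fromRel (fun a b =>
    match a, b with
    | Sum.inl u, Sum.inl v => G.Adj u v
    | Sum.inl u, Sum.inr z => u = z.1
    | _, _ => False)

section histaux
open SimpleGraph Walk

variable {W : Type*} {Gr : SimpleGraph W}

lemma nbr_empty {a b w : W} (q : Gr.Walk a b) (hw : w ∉ q.support) :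
    {u | s(w,u) ∈ q.edges} = ∅ := by
  ext u
  simp only [Set.mem_setOf_eq, Set.mem_empty_iff_false, iff_false]
  intro h
  exact hw (q.fst_mem_support_of_mem_edges h)

lemma nbr_start {a b : W} (q : Gr.Walk a b) (hq : q.IsPath) (hab : a ≠ b) :
    ∃ c, c ∈ q.support ∧ {u | s(a,u) ∈ q.edges} = {c} := by
  cases q with
  | nil => exact absurd rfl hab
  | @cons _ v _ h q' =>
    refine ⟨v, by simp, ?_⟩
    ext u
    simp only [Set.mem_setOf_eq, Walk.edges_cons, List.mem_cons, Set.mem_singleton_iff]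
    constructor
    · rintro (he | he)
      · rcases Sym2.eq_iff.mp he with ⟨-, h2⟩ | ⟨h1, -⟩
        · exact h2
        · exact absurd h1 h.ne
      · exact absurd (q'.fst_mem_support_of_mem_edges he)
          ((Walk.cons_isPath_iff h q').mp hq).2
    · rintro rfl; exact Or.inl rfl

lemma nbr_internal {w : W} : ∀ {a b : W} (q : Gr.Walk a b), q.IsPath → w ∈ q.support →
    w ≠ a → w ≠ b →
    ∃ c d, c ≠ d ∧ c ∈ q.support ∧ d ∈ q.support ∧ {u | s(w,u) ∈ q.edges} = {c, d} := by
  intro a b q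
  induction q with
  | nil => intro _ hw hwa _; simp only [Walk.support_nil, List.mem_singleton] at hw
           exact absurd hw hwa
  | @cons a' v' b' h q' ih =>
    intro hq hw hwa hwb
    have hq' : q'.IsPath := ((Walk.cons_isPath_iff h q').mp hq).1
    have hans : a' ∉ q'.support := ((Walk.cons_isPath_iff h q').mp hq).2
    have hw' : w ∈ q'.support := by
      have := (Walk.support_cons h q') ▸ hw
      rcases List.mem_cons.mp this with h1 | h1
      · exact absurd h1 hwa
      · exact h1
    by_cases hwv : w = v'
    · subst hwv
      obtain ⟨c, hcs, hc⟩ := nbr_start q' hq' hwb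
      have hcm : s(w, c) ∈ q'.edges := by
        have : c ∈ {u | s(w,u) ∈ q'.edges} := by rw [hc]; rfl
        exact this
      refine ⟨a', c, ?_, by simp, by simp [hcs], ?_⟩
      · rintro rfl; exact hans hcs
      · ext u
        simp only [Set.mem_setOf_eq, Walk.edges_cons, List.mem_cons, Set.mem_insert_iff,
          Set.mem_singleton_iff]
        constructor
        · rintro (he | he)
          · rcases Sym2.eq_iff.mp he with ⟨h1, -⟩ | ⟨-, h2⟩
            · exact absurd h1.symm h.ne
            · exact Or.inl h2
          · have : u ∈ {u | s(w,u) ∈ q'.edges} := he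
            rw [hc] at this
            exact Or.inr this
        · rintro (rfl | rfl)
          · exact Or.inl Sym2.eq_swap
          · exact Or.inr hcm
    · obtain ⟨c, d, hcd, hcs, hds, hset⟩ := ih hq' hw' hwv hwb
      refine ⟨c, d, hcd, by simp [hcs], by simp [hds], ?_⟩
      ext u
      simp only [Set.mem_setOf_eq, Walk.edges_cons, List.mem_cons]
      have : (u ∈ {u | s(w,u) ∈ q'.edges}) ↔ u ∈ ({c,d} : Set W) := by rw [hset]
      constructor
      · rintro (he | he)
        · rcases Sym2.eq_iff.mp he with ⟨h1, -⟩ | ⟨h1, -⟩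
          · exact absurd h1 hwa
          · exact absurd h1 hwv
        · exact this.mp he
      · intro hu
        exact Or.inr (this.mpr hu)

lemma cycle_two_nbrs {v a : W} (c : Gr.Walk a a) (hc : c.IsCycle) (hv : v ∈ c.support) :
    ∃ w₁ w₂, w₁ ≠ w₂ ∧ s(v,w₁) ∈ c.edges ∧ s(v,w₂) ∈ c.edges := by
  classical
  have hrot := hc.rotate hv
  have hedge : ∀ e, e ∈ (c.rotate _ hv).edges ↔ e ∈ c.edges := fun e =>
    (c.rotate_edges _ hv).mem_iff
  set c' := c.rotate _ hv with hc'
  clear_value c'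
  cases c' with
  | nil => exact absurd rfl hrot.ne_nil
  | @cons _ w₁ _ h q =>
    have hqnil : ¬ q.Nil := by
      intro hnil
      have : w₁ = v := hnil.eq  -- endpoints of nil walk equal? check
      exact h.ne (this ▸ rfl)
    have hrq : ¬ q.reverse.Nil := by rw [Walk.nil_iff_length_eq] at hqnil ⊢; simpa using hqnil
    obtain ⟨u, h', q₂, hq⟩ := (Walk.not_nil_iff).mp hrq
    have hu : s(v, u) ∈ q.edges := by
      have : s(v, u) ∈ q.reverse.edges := by rw [hq]; simp
      rwa [Walk.edges_reverse, List.mem_reverse] at this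
    have hnodup : (cons h q).edges.Nodup := hrot.isTrail.edges_nodup
    have hne : w₁ ≠ u := by
      rintro rfl
      rw [Walk.edges_cons, List.nodup_cons] at hnodup
      exact hnodup.1 hu
    refine ⟨w₁, u, hne, ?_, ?_⟩
    · rw [← hedge]; simp
    · rw [← hedge]
      rw [Walk.edges_cons]
      exact List.mem_cons_of_mem _ hu

lemma path_acyclic : ∀ {a b : W} (q : Gr.Walk a b), q.IsPath →
    (SimpleGraph.fromEdgeSet {e | e ∈ q.edges}).IsAcyclic := by
  intro a b q
  induction q with
  | nil =>
    intro _ v c hc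
    cases c with
    | nil => exact hc.ne_nil rfl
    | cons hadj q₂ =>
      rw [fromEdgeSet_adj] at hadj
      simp at hadj
  | @cons a v' b h q' ih =>
    intro hq
    have hq' : q'.IsPath := ((Walk.cons_isPath_iff h q').mp hq).1
    have hans : a ∉ q'.support := ((Walk.cons_isPath_iff h q').mp hq).2
    intro v c hc
    -- a is not in the support of c
    have hmemedge : ∀ w₁ w₂ : W, s(w₁,w₂) ∈ c.edges → s(w₁,w₂) ∈ (Walk.cons h q').edges := by
      intro w₁ w₂ hmem
      have := c.edges_subset_edgeSet hmem
      rw [edgeSet_fromEdgeSet] at this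
      exact this.1
    have has : a ∉ c.support := by
      intro has
      obtain ⟨w₁, w₂, hne, h1, h2⟩ := cycle_two_nbrs c hc has
      have key : ∀ w, s(a,w) ∈ c.edges → w = v' := by
        intro w hw
        have := hmemedge _ _ hw
        rw [Walk.edges_cons, List.mem_cons] at this
        rcases this with he | he
        · rcases Sym2.eq_iff.mp he with ⟨-, h2'⟩ | ⟨h1', -⟩
          · exact h2'
          · exact absurd h1' h.ne
        · exact absurd (q'.fst_mem_support_of_mem_edges he) hans
      exact hne ((key _ h1).trans (key _ h2).symm)
    -- transfer c to the smaller graph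
    have htrans : ∀ e ∈ c.edges, e ∈ (SimpleGraph.fromEdgeSet {e | e ∈ q'.edges}).edgeSet := by
      intro e he
      induction e with
      | h w₁ w₂ =>
        have h1 : w₁ ∈ c.support := c.fst_mem_support_of_mem_edges he
        have h2 : w₂ ∈ c.support := c.snd_mem_support_of_mem_edges he
        have hmem := hmemedge _ _ he
        rw [Walk.edges_cons, List.mem_cons] at hmem
        rcases hmem with he' | he'
        · rcases Sym2.eq_iff.mp he' with ⟨h1', -⟩ | ⟨-, h2'⟩
          · exact absurd (h1' ▸ h1) has
          · exact absurd (h2' ▸ h2) has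
        · rw [edgeSet_fromEdgeSet]
          refine ⟨he', ?_⟩
          intro hdiag
          have : w₁ = w₂ := hdiag
          have hadj := c.adj_of_mem_edges he
          exact hadj.ne this
    exact ih hq' (c.transfer _ htrans) (hc.transfer htrans)

lemma nbr_end {a b : W} (q : Gr.Walk a b) (hq : q.IsPath) (hab : a ≠ b) :
    ∃ c, c ∈ q.support ∧ {u | s(b,u) ∈ q.edges} = {c} := by
  obtain ⟨c, hcs, hc⟩ := nbr_start q.reverse hq.reverse hab.symm
  refine ⟨c, by rwa [Walk.support_reverse, List.mem_reverse] at hcs, ?_⟩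
  rw [← hc]
  ext u
  simp [Walk.edges_reverse, List.mem_reverse]

lemma adj_of_reachable_ne {a b : W} (h : Gr.Reachable a b) (hne : a ≠ b) :
    ∃ c, Gr.Adj a c := by
  obtain ⟨w⟩ := h
  cases w with
  | nil => exact absurd rfl hne
  | cons h' q => exact ⟨_, h'⟩


end histaux

section histaux2
open SimpleGraph Walk

section inlreach
variable {V S' : Type*} {T : SimpleGraph (V ⊕ S')}

lemma reach_of_inl_walk : ∀ {a b : V ⊕ S'} (q : T.Walk a b),
    (∀ w ∈ q.support, ∃ u', w = Sum.inl u') →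
    ∀ u v, a = Sum.inl u → b = Sum.inl v → (T.comap Sum.inl).Reachable u v := by
  intro a b q
  induction q with
  | nil =>
    rintro - u v rfl hv
    rw [Sum.inl.inj hv]
  | @cons a b c h q ih =>
    rintro hsup u v rfl rfl
    obtain ⟨u', rfl⟩ := hsup b (by simp [Walk.support_cons, q.start_mem_support])
    have hadj : (T.comap Sum.inl).Adj u u' := h
    refine hadj.reachable.trans (ih ?_ u' v rfl rfl)
    intro w hw
    exact hsup w (by simp [Walk.support_cons, hw])
end inlreach

variable {V : Type*} {G : SimpleGraph V} {x y : V}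

@[simp] lemma pendantExt_adj_inl_inl {u v : V} :
    (pendantExt G x y).Adj (Sum.inl u) (Sum.inl v) ↔ G.Adj u v := by
  simp only [pendantExt, fromRel_adj]
  constructor
  · rintro ⟨-, h | h⟩
    · exact h
    · exact h.symm
  · intro h
    exact ⟨by simpa using h.ne, Or.inl h⟩

@[simp] lemma pendantExt_adj_inl_inr {u : V} {z : {z : V // z ≠ x ∧ z ≠ y}} :
    (pendantExt G x y).Adj (Sum.inl u) (Sum.inr z) ↔ u = z.1 := by
  simp only [pendantExt, fromRel_adj]
  constructor
  · rintro ⟨-, h | h⟩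
    · exact h
    · exact h.elim
  · intro h
    exact ⟨by simp, Or.inl h⟩

@[simp] lemma pendantExt_adj_inr_inl {u : V} {z : {z : V // z ≠ x ∧ z ≠ y}} :
    (pendantExt G x y).Adj (Sum.inr z) (Sum.inl u) ↔ u = z.1 := by
  rw [adj_comm]; exact pendantExt_adj_inl_inr

@[simp] lemma pendantExt_adj_inr_inr {z w : {z : V // z ≠ x ∧ z ≠ y}} :
    ¬ (pendantExt G x y).Adj (Sum.inr z) (Sum.inr w) := by
  simp [pendantExt, fromRel_adj]

def homInl : G →g pendantExt G x y where
  toFun := Sum.inl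
  map_rel' := fun h => pendantExt_adj_inl_inl.mpr h

section fwd
variable {V : Type*} [Fintype V] [DecidableEq V] {G : SimpleGraph V} {x y : V}

theorem hist_forward (hxy : x ≠ y) (p : G.Walk x y) (hp : p.IsHamiltonian) :
    ∃ T : SimpleGraph (V ⊕ {z : V // z ≠ x ∧ z ≠ y}),
      T ≤ pendantExt G x y ∧ T.IsTree ∧
      ∀ v, (T.neighborSet v).ncard ≠ 2 := by
  classical
  set S := {z : V // z ≠ x ∧ z ≠ y}
  let pm : (pendantExt G x y).Walk (Sum.inl x) (Sum.inl y) := p.map homInl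
  have hpmPath : pm.IsPath := Walk.map_isPath_of_injective Sum.inl_injective hp.isPath
  have hpmsup : ∀ w, w ∈ pm.support ↔ ∃ u : V, w = Sum.inl u := by
    intro w
    constructor
    · intro hw
      rw [show pm.support = p.support.map homInl from Walk.support_map (f := homInl) (p := p)] at hw
      obtain ⟨u, -, rfl⟩ := List.mem_map.mp hw
      exact ⟨u, rfl⟩
    · rintro ⟨u, rfl⟩
      rw [show pm.support = p.support.map homInl from Walk.support_map (f := homInl) (p := p)]
      exact List.mem_map_of_mem (hp.mem_support u)
  set T : SimpleGraph (V ⊕ S) := SimpleGraph.fromEdgeSet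
    ({e | e ∈ pm.edges} ∪ Set.range (fun z : S => s(Sum.inl z.1, Sum.inr z))) with hT
  have hTadj : ∀ a b, T.Adj a b ↔
      (s(a,b) ∈ pm.edges ∨ ∃ z : S, s(a,b) = s(Sum.inl z.1, Sum.inr z)) ∧ a ≠ b := by
    intro a b
    rw [hT, fromEdgeSet_adj]
    simp only [Set.mem_union, Set.mem_setOf_eq, Set.mem_range]
    constructor
    · rintro ⟨h | ⟨z, hz⟩, hne⟩
      · exact ⟨Or.inl h, hne⟩
      · exact ⟨Or.inr ⟨z, hz.symm⟩, hne⟩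
    · rintro ⟨h | ⟨z, hz⟩, hne⟩
      · exact ⟨Or.inl h, hne⟩
      · exact ⟨Or.inr ⟨z, hz.symm⟩, hne⟩
  -- T ≤ pendantExt
  have hle : T ≤ pendantExt G x y := by
    intro a b hab
    rw [hTadj] at hab
    obtain ⟨he | ⟨z, hz⟩, hne⟩ := hab
    · exact (pendantExt G x y).mem_edgeSet.mp (pm.edges_subset_edgeSet he)
    · rcases Sym2.eq_iff.mp hz with ⟨rfl, rfl⟩ | ⟨rfl, rfl⟩
      · exact pendantExt_adj_inl_inr.mpr rfl
      · exact pendantExt_adj_inr_inl.mpr rfl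
  -- edges of pm are edges of T
  have hpmT : ∀ e ∈ pm.edges, e ∈ T.edgeSet := by
    intro e he
    rw [hT, edgeSet_fromEdgeSet]
    exact ⟨Or.inl he, fun hd => (pendantExt G x y).not_isDiag_of_mem_edgeSet
      (pm.edges_subset_edgeSet he) hd⟩
  have hpend : ∀ z : S, T.Adj (Sum.inl z.1) (Sum.inr z) := by
    intro z
    rw [hTadj]
    exact ⟨Or.inr ⟨z, rfl⟩, by simp⟩
  -- analysis of neighbors of inr z in T
  have hinrN : ∀ (z : S) (b : V ⊕ S), T.Adj (Sum.inr z) b → b = Sum.inl z.1 := by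
    intro z b hzb
    rw [hTadj] at hzb
    obtain ⟨he | ⟨w, hw⟩, hne⟩ := hzb
    · exact absurd ((hpmsup _).mp (pm.fst_mem_support_of_mem_edges he)) (by simp)
    · rcases Sym2.eq_iff.mp hw with ⟨h1, -⟩ | ⟨h1, h2⟩
      · exact absurd h1 (by simp)
      · rw [h2]
        rcases Sum.inr.inj_iff.mp h1 with rfl
        rfl
  -- Connectivity
  have hsup : ∀ u : V, Sum.inl u ∈ (pm.transfer T hpmT).support := by
    intro u
    rw [Walk.support_transfer]
    exact (hpmsup _).mpr ⟨u, rfl⟩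
  have hreach : ∀ a : V ⊕ S, T.Reachable (Sum.inl x) a := by
    intro a
    match a with
    | Sum.inl u => exact ((pm.transfer T hpmT).takeUntil _ (hsup u)).reachable
    | Sum.inr z =>
      exact Reachable.trans (((pm.transfer T hpmT).takeUntil _ (hsup z.1)).reachable) ((hpend z).reachable)
  have hconn : T.Connected := by
    have : Nonempty (V ⊕ S) := ⟨Sum.inl x⟩
    exact ⟨fun a b => (hreach a).symm.trans (hreach b)⟩
  -- Acyclicity
  have hacyc : T.IsAcyclic := by
    intro v c hc
    have hnoinr : ∀ z : S, Sum.inr z ∉ c.support := by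
      intro z hz
      obtain ⟨w₁, w₂, hne, h1, h2⟩ := cycle_two_nbrs c hc hz
      have e1 := hinrN z w₁ (c.adj_of_mem_edges h1)
      have e2 := hinrN z w₂ (c.adj_of_mem_edges h2)
      exact hne (e1.trans e2.symm)
    have htrans : ∀ e ∈ c.edges, e ∈ (SimpleGraph.fromEdgeSet {e | e ∈ pm.edges}).edgeSet := by
      intro e he
      have hT' := c.edges_subset_edgeSet he
      rw [hT, edgeSet_fromEdgeSet] at hT'
      obtain ⟨hm, hd⟩ := hT'
      rcases hm with hm | ⟨z, hz⟩
      · rw [edgeSet_fromEdgeSet]; exact ⟨hm, hd⟩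
      · exfalso
        rw [← hz] at he
        exact hnoinr z (c.snd_mem_support_of_mem_edges he)
    exact path_acyclic pm hpmPath (c.transfer _ htrans) (hc.transfer htrans)
  -- degrees are never 2
  have hnediag : ∀ (a b : V ⊕ S), s(a,b) ∈ pm.edges → a ≠ b := by
    intro a b hm
    exact fun hab => (pendantExt G x y).not_isDiag_of_mem_edgeSet
      (pm.edges_subset_edgeSet hm) (hab ▸ rfl)
  have hdeg : ∀ a, (T.neighborSet a).ncard ≠ 2 := by
    intro a
    match a with
    | Sum.inr z =>
      have hNz : T.neighborSet (Sum.inr z) = {Sum.inl z.1} := by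
        apply Set.eq_singleton_iff_unique_mem.mpr
        exact ⟨(hpend z).symm, fun b hb => hinrN z b hb⟩
      rw [hNz, Set.ncard_singleton]
      omega
    | Sum.inl u =>
      have hnopend : ∀ (hu : ¬(u ≠ x ∧ u ≠ y)) (b : V ⊕ S), T.Adj (Sum.inl u) b →
          s(Sum.inl u, b) ∈ pm.edges := by
        intro hu b hadj
        rw [hTadj] at hadj
        obtain ⟨hm | ⟨z, hz⟩, -⟩ := hadj
        · exact hm
        · exfalso
          rcases Sym2.eq_iff.mp hz with ⟨h1, -⟩ | ⟨h1, -⟩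
          · exact hu (Sum.inl.inj h1 ▸ z.2)
          · exact Sum.inl_ne_inr h1
      have hSingle : ∀ (c₀ : V ⊕ S), {w | s(Sum.inl u, w) ∈ pm.edges} = {c₀} →
          (¬(u ≠ x ∧ u ≠ y)) → (T.neighborSet (Sum.inl u)).ncard ≠ 2 := by
        intro c₀ hset hu
        have : T.neighborSet (Sum.inl u) = {c₀} := by
          ext b
          constructor
          · intro hb
            have := hnopend hu b hb
            have hbb : b ∈ {w | s(Sum.inl u, w) ∈ pm.edges} := this
            rwa [hset] at hbb
          · intro hb
            have hbb : s(Sum.inl u, b) ∈ pm.edges := by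
              have : b ∈ {w | s(Sum.inl u, w) ∈ pm.edges} := by rw [hset]; exact hb
              exact this
            exact (T.mem_neighborSet _ _).mpr ((hTadj _ _).mpr ⟨Or.inl hbb, hnediag _ _ hbb⟩)
        rw [this, Set.ncard_singleton]
        omega
      by_cases hux : u = x
      · subst hux
        obtain ⟨c₀, -, hset⟩ := nbr_start pm hpmPath (by simp [hxy])
        exact hSingle c₀ hset (by simp)
      by_cases huy : u = y
      · subst huy
        obtain ⟨c₀, -, hset⟩ := nbr_end pm hpmPath (by simp [hxy])
        exact hSingle c₀ hset (by simp)
      -- internal vertex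
      · have hu : u ≠ x ∧ u ≠ y := ⟨hux, huy⟩
        set zu : S := ⟨u, hu⟩ with hzu
        obtain ⟨c, d, hcd, hcs, hds, hset⟩ := nbr_internal pm hpmPath
          ((hpmsup _).mpr ⟨u, rfl⟩) (by simp [hux]) (by simp [huy])
        have hcinl : ∃ u', c = Sum.inl u' := (hpmsup _).mp hcs
        have hdinl : ∃ u', d = Sum.inl u' := (hpmsup _).mp hds
        have hN : T.neighborSet (Sum.inl u) = insert (Sum.inr zu) {c, d} := by
          ext b
          simp only [mem_neighborSet, Set.mem_insert_iff]
          constructor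
          · intro hadj
            rw [hTadj] at hadj
            obtain ⟨hm | ⟨z, hz⟩, -⟩ := hadj
            · have hbb : b ∈ {w | s(Sum.inl u, w) ∈ pm.edges} := hm
              rw [hset] at hbb
              rcases hbb with h | h
              · exact Or.inr (Or.inl h)
              · exact Or.inr (Or.inr h)
            · rcases Sym2.eq_iff.mp hz with ⟨h1, h2⟩ | ⟨h1, -⟩
              · left
                have hzz : z = zu := Subtype.ext (Sum.inl.inj h1).symm
                rw [h2, hzz]
              · exact absurd h1 Sum.inl_ne_inr
          · rintro (rfl | hb)
            · exact hpend zu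
            · have hbb : s(Sum.inl u, b) ∈ pm.edges := by
                have : b ∈ {w | s(Sum.inl u, w) ∈ pm.edges} := by
                  rw [hset]
                  rcases hb with rfl | rfl
                  · exact Or.inl rfl
                  · exact Or.inr rfl
                exact this
              exact (T.mem_neighborSet _ _).mpr
                ((hTadj _ _).mpr ⟨Or.inl hbb, hnediag _ _ hbb⟩)
        rw [hN]
        have h1 : (Sum.inr zu : V ⊕ S) ∉ ({c, d} : Set (V ⊕ S)) := by
          rintro (rfl | rfl)
          · obtain ⟨u', hu'⟩ := hcinl; exact Sum.inl_ne_inr hu'.symm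
          · obtain ⟨u', hu'⟩ := hdinl; exact Sum.inl_ne_inr hu'.symm
        rw [Set.ncard_insert_of_notMem h1 (Set.toFinite _), Set.ncard_pair hcd]
        omega
  exact ⟨T, hle, ⟨hconn, hacyc⟩, hdeg⟩
end fwd

section bwd
variable {V : Type*} [Fintype V] [DecidableEq V] {G : SimpleGraph V} {x y : V}

theorem hist_backward (hxy : x ≠ y) (T : SimpleGraph (V ⊕ {z : V // z ≠ x ∧ z ≠ y}))
    (hle : T ≤ pendantExt G x y) (hTree : T.IsTree)
    (hdeg : ∀ v, (T.neighborSet v).ncard ≠ 2) :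
    ∃ p : G.Walk x y, p.IsHamiltonian := by
  classical
  have hnontriv : Nontrivial V := ⟨x, y, hxy⟩
  have hn : 2 ≤ Fintype.card V := Fintype.one_lt_card
  set n := Fintype.card V with hn'
  -- only possible neighbor of a pendant vertex
  have hinrN : ∀ (z : {z : V // z ≠ x ∧ z ≠ y}) (b : V ⊕ {z : V // z ≠ x ∧ z ≠ y}), T.Adj (Sum.inr z) b → b = Sum.inl z.1 := by
    intro z b hadj
    have := hle hadj
    match b with
    | Sum.inl u => rw [pendantExt_adj_inr_inl] at this; rw [this]
    | Sum.inr w => exact absurd this (pendantExt_adj_inr_inr)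
  have hpend : ∀ z : {z : V // z ≠ x ∧ z ≠ y}, T.Adj (Sum.inr z) (Sum.inl z.1) := by
    intro z
    obtain ⟨c, hc⟩ := adj_of_reachable_ne
      (hTree.isConnected.preconnected (Sum.inr z) (Sum.inl x)) (by simp)
    rwa [hinrN z c hc] at hc
  have hNz : ∀ z : {z : V // z ≠ x ∧ z ≠ y}, T.neighborSet (Sum.inr z) = {Sum.inl z.1} :=
    fun z => Set.eq_singleton_iff_unique_mem.mpr ⟨hpend z, fun b hb => hinrN z b hb⟩
  -- the restriction of T to V
  set H : SimpleGraph V := T.comap Sum.inl with hH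
  have hHG : H ≤ G := by
    intro u v h
    exact pendantExt_adj_inl_inl.mp (hle h)
  -- neighbor set decomposition at inl vertices
  have hNl : ∀ (u : V) (hu : u ≠ x ∧ u ≠ y),
      T.neighborSet (Sum.inl u) = Sum.inl '' (H.neighborSet u) ∪ {Sum.inr ⟨u, hu⟩} := by
    intro u hu
    ext b
    simp only [Set.mem_union, Set.mem_image, mem_neighborSet, Set.mem_singleton_iff]
    constructor
    · intro hadj
      match b with
      | Sum.inl v => exact Or.inl ⟨v, hadj, rfl⟩
      | Sum.inr z =>
        right
        have := hle hadj
        rw [pendantExt_adj_inl_inr] at this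
        congr 1
        exact Subtype.ext this.symm
    · rintro (⟨v, hv, rfl⟩ | rfl)
      · exact hv
      · exact (hpend ⟨u, hu⟩).symm
  have hNl2 : ∀ u : V, ¬(u ≠ x ∧ u ≠ y) →
      T.neighborSet (Sum.inl u) = Sum.inl '' (H.neighborSet u) := by
    intro u hu
    ext b
    simp only [Set.mem_image, mem_neighborSet]
    constructor
    · intro hadj
      match b with
      | Sum.inl v => exact ⟨v, hadj, rfl⟩
      | Sum.inr z =>
        exfalso
        have := hle hadj
        rw [pendantExt_adj_inl_inr] at this
        exact hu (this ▸ z.2)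
    · rintro ⟨v, hv, rfl⟩
      exact hv
  have hdlI : ∀ (u : V) (hu : u ≠ x ∧ u ≠ y),
      (T.neighborSet (Sum.inl u)).ncard = (H.neighborSet u).ncard + 1 := by
    intro u hu
    rw [hNl u hu, Set.union_singleton,
      Set.ncard_insert_of_notMem (by rintro ⟨v, -, hv⟩; exact Sum.inl_ne_inr hv) (Set.toFinite _),
      Set.ncard_image_of_injective _ Sum.inl_injective]
  have hdlB : ∀ u : V, ¬(u ≠ x ∧ u ≠ y) →
      (T.neighborSet (Sum.inl u)).ncard = (H.neighborSet u).ncard := by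
    intro u hu
    rw [hNl2 u hu, Set.ncard_image_of_injective _ Sum.inl_injective]
  -- H is connected
  have hHreach : ∀ u v : V, H.Reachable u v := by
    intro u v
    obtain ⟨w⟩ := hTree.isConnected.preconnected (Sum.inl u) (Sum.inl v)
    have hq : w.toPath.1.IsPath := w.toPath.2
    have hnoinr : ∀ b ∈ w.toPath.1.support, ∃ u', b = Sum.inl u' := by
      intro b hb
      match b with
      | Sum.inl u' => exact ⟨u', rfl⟩
      | Sum.inr z =>
        exfalso
        obtain ⟨c, d, hcd, -, -, hset⟩ := nbr_internal w.toPath.1 hq hb (by simp) (by simp)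
        have hc : s(Sum.inr z, c) ∈ w.toPath.1.edges := by
          have : c ∈ {u | s(Sum.inr z, u) ∈ w.toPath.1.edges} := by
            rw [hset]; exact Or.inl rfl
          exact this
        have hd : s(Sum.inr z, d) ∈ w.toPath.1.edges := by
          have : d ∈ {u | s(Sum.inr z, u) ∈ w.toPath.1.edges} := by
            rw [hset]; exact Or.inr rfl
          exact this
        exact hcd ((hinrN z c (w.toPath.1.adj_of_mem_edges hc)).trans
          (hinrN z d (w.toPath.1.adj_of_mem_edges hd)).symm)
    exact reach_of_inl_walk w.toPath.1 hnoinr u v rfl rfl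
  have hd1 : ∀ u : V, 1 ≤ (H.neighborSet u).ncard := by
    intro u
    obtain ⟨v, hv⟩ := exists_ne u
    obtain ⟨c, hc⟩ := adj_of_reachable_ne (hHreach u v) hv.symm
    exact (Set.ncard_pos (Set.toFinite _)).mpr ⟨c, (H.mem_neighborSet u c).mpr hc⟩
  -- degree bookkeeping
  have hdegree : ∀ w : V ⊕ {z : V // z ≠ x ∧ z ≠ y},
      (T.neighborSet w).ncard = T.degree w := by
    intro w
    rw [← card_neighborSet_eq_degree, Set.ncard_eq_toFinset_card', Set.toFinset_card]
  have hcardS : Fintype.card {z : V // z ≠ x ∧ z ≠ y} = n - 2 := by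
    rw [Fintype.card_subtype]
    have heq : Finset.univ.filter (fun z : V => z ≠ x ∧ z ≠ y) = Finset.univ \ {x, y} := by
      ext z
      simp [not_or]
    rw [heq, Finset.card_sdiff_of_subset (by simp), Finset.card_pair hxy, Finset.card_univ]
  have hhand := T.sum_degrees_eq_twice_card_edges
  have hedges := hTree.card_edgeFinset
  have hcardsum : Fintype.card (V ⊕ {z : V // z ≠ x ∧ z ≠ y}) = n + (n - 2) := by
    rw [Fintype.card_sum, hcardS]
  have hfilterc : (Finset.univ.filter (fun u : V => ¬(u = x ∨ u = y))).card = n - 2 := by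
    have heq : Finset.univ.filter (fun u : V => ¬(u = x ∨ u = y)) = Finset.univ \ {x, y} := by
      ext z
      simp [not_or]
    rw [heq, Finset.card_sdiff_of_subset (by simp), Finset.card_pair hxy, Finset.card_univ]
  have hsplit : ∑ w : V ⊕ {z : V // z ≠ x ∧ z ≠ y}, T.degree w
      = (∑ u : V, T.degree (Sum.inl u)) + ∑ z : {z : V // z ≠ x ∧ z ≠ y}, T.degree (Sum.inr z) :=
    Fintype.sum_sum_type _
  have hpendsum : ∑ z : {z : V // z ≠ x ∧ z ≠ y}, T.degree (Sum.inr z) = n - 2 := by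
    have hone : ∀ z : {z : V // z ≠ x ∧ z ≠ y}, T.degree (Sum.inr z) = 1 := by
      intro z
      rw [← hdegree, hNz z, Set.ncard_singleton]
    rw [Finset.sum_congr rfl (fun z _ => hone z), Finset.sum_const, smul_eq_mul, mul_one,
      Finset.card_univ, hcardS]
  have hinlsum : ∑ u : V, T.degree (Sum.inl u)
      = (∑ u : V, (H.neighborSet u).ncard) + (n - 2) := by
    have h1 : ∀ u : V, T.degree (Sum.inl u)
        = (H.neighborSet u).ncard + (if u = x ∨ u = y then 0 else 1) := by
      intro u
      by_cases hu : u = x ∨ u = y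
      · rw [if_pos hu, ← hdegree, hdlB u (by tauto), Nat.add_zero]
      · push_neg at hu
        rw [if_neg (by tauto), ← hdegree, hdlI u hu]
    rw [Finset.sum_congr rfl (fun u _ => h1 u), Finset.sum_add_distrib]
    congr 1
    rw [Finset.sum_ite, Finset.sum_const, Finset.sum_const, smul_eq_mul, smul_eq_mul,
      mul_zero, mul_one, zero_add, hfilterc]
  have hsum : (∑ u : V, (H.neighborSet u).ncard) = 2 * n - 2 := by
    rw [hsplit, hinlsum, hpendsum] at hhand
    rw [hcardsum] at hedges
    omega
  -- pointwise lower bounds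
  have hge : ∀ u ∈ (Finset.univ : Finset V),
      (if u = x ∨ u = y then 1 else 2) ≤ (H.neighborSet u).ncard := by
    intro u _
    by_cases hu : u = x ∨ u = y
    · rw [if_pos hu]; exact hd1 u
    · rw [if_neg hu]
      push_neg at hu
      have hne1 : (H.neighborSet u).ncard ≠ 1 := by
        intro h1
        exact hdeg (Sum.inl u) (by rw [hdlI u hu, h1])
      have := hd1 u
      omega
  have hsumg : (∑ u : V, (if u = x ∨ u = y then 1 else 2)) = 2 * n - 2 := by
    have hfilter1 : Finset.univ.filter (fun u : V => u = x ∨ u = y) = {x, y} := by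
      ext z
      simp
    rw [Finset.sum_ite, Finset.sum_const, Finset.sum_const, smul_eq_mul, smul_eq_mul,
      mul_one, hfilter1, hfilterc, Finset.card_pair hxy]
    omega
  have hpoint := (Finset.sum_eq_sum_iff_of_le hge).mp (by rw [hsumg, hsum])
  have hfx : (H.neighborSet x).ncard = 1 := by
    have := hpoint x (Finset.mem_univ x)
    rw [if_pos (Or.inl rfl)] at this
    exact this.symm
  have hfy : (H.neighborSet y).ncard = 1 := by
    have := hpoint y (Finset.mem_univ y)
    rw [if_pos (Or.inr rfl)] at this
    exact this.symm
  have hfint : ∀ u : V, u ≠ x → u ≠ y → (H.neighborSet u).ncard = 2 := by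
    intro u h1 h2
    have := hpoint u (Finset.mem_univ u)
    rw [if_neg (by tauto)] at this
    exact this.symm
  -- extract the Hamiltonian path
  obtain ⟨w0⟩ := hHreach x y
  have hqPath : w0.toPath.1.IsPath := w0.toPath.2
  have hall : ∀ v : V, v ∈ w0.toPath.1.support := by
    by_contra hcon
    push_neg at hcon
    obtain ⟨v, hv⟩ := hcon
    obtain ⟨w2⟩ := hHreach x v
    obtain ⟨dd, -, hdin, hdout⟩ := w2.exists_boundary_dart {w | w ∈ w0.toPath.1.support}
      (w0.toPath.1.start_mem_support) hv
    have hadj : H.Adj dd.fst dd.snd := dd.adj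
    have hNin : ∀ b, H.Adj dd.fst b → b ∈ w0.toPath.1.support := by
      rcases eq_or_ne dd.fst x with hfst | hfstx
      · obtain ⟨c, hcs, hset⟩ := nbr_start w0.toPath.1 hqPath hxy
        have hcN : c ∈ H.neighborSet x := w0.toPath.1.adj_of_mem_edges (by
          have : c ∈ {u | s(x, u) ∈ w0.toPath.1.edges} := by rw [hset]; rfl
          exact this)
        obtain ⟨a, ha⟩ := Set.ncard_eq_one.mp hfx
        have hca : c = a := by rw [ha] at hcN; exact hcN
        intro b hb
        have : b ∈ H.neighborSet x := hfst ▸ hb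
        rw [ha, Set.mem_singleton_iff] at this
        rw [this, ← hca]
        exact hcs
      rcases eq_or_ne dd.fst y with hfst | hfsty
      · obtain ⟨c, hcs, hset⟩ := nbr_end w0.toPath.1 hqPath hxy
        have hcN : c ∈ H.neighborSet y := w0.toPath.1.adj_of_mem_edges (by
          have : c ∈ {u | s(y, u) ∈ w0.toPath.1.edges} := by rw [hset]; rfl
          exact this)
        obtain ⟨a, ha⟩ := Set.ncard_eq_one.mp hfy
        have hca : c = a := by rw [ha] at hcN; exact hcN
        intro b hb
        have : b ∈ H.neighborSet y := hfst ▸ hb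
        rw [ha, Set.mem_singleton_iff] at this
        rw [this, ← hca]
        exact hcs
      · obtain ⟨c, d, hcd, hcs, hds, hset⟩ := nbr_internal w0.toPath.1 hqPath hdin hfstx hfsty
        have hsub : ({c, d} : Set V) ⊆ H.neighborSet dd.fst := by
          rintro b (rfl | rfl)
          · exact w0.toPath.1.adj_of_mem_edges (by
              have : b ∈ {u | s(dd.fst, u) ∈ w0.toPath.1.edges} := by
                rw [hset]; exact Or.inl rfl
              exact this)
          · exact w0.toPath.1.adj_of_mem_edges (by
              have : b ∈ {u | s(dd.fst, u) ∈ w0.toPath.1.edges} := by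
                rw [hset]; exact Or.inr rfl
              exact this)
        have heq : ({c, d} : Set V) = H.neighborSet dd.fst := by
          apply Set.eq_of_subset_of_ncard_le hsub _ (Set.toFinite _)
          rw [hfint dd.fst hfstx hfsty, Set.ncard_pair hcd]
        intro b hb
        have : b ∈ ({c, d} : Set V) := heq ▸ hb
        rcases this with rfl | rfl
        · exact hcs
        · exact hds
    exact hdout (hNin dd.snd hadj)
  have hHam : w0.toPath.1.IsHamiltonian := hqPath.isHamiltonian_iff.mpr hall
  refine ⟨w0.toPath.1.map (Hom.ofLE hHG), ?_⟩
  exact hHam.map _ Function.bijective_id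
end bwd

end histaux2

open SimpleGraph Walk in
set_option maxHeartbeats 1000000 in
/-- `G` has a Hamiltonian path between `x` and `y` if and only if `G'` (the graph obtained
from `G` by attaching a pendant vertex to every vertex other than `x` and `y`) has a
spanning tree with no vertex of degree 2 (a HIST). -/
theorem stmt_12 {V : Type*} [Fintype V] [DecidableEq V] (G : SimpleGraph V)
    (x y : V) (hxy : x ≠ y) :
    (∃ p : G.Walk x y, p.IsHamiltonian) ↔
      ∃ T : SimpleGraph (V ⊕ {z : V // z ≠ x ∧ z ≠ y}),
        T ≤ pendantExt G x y ∧ T.IsTree ∧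
        ∀ v, (T.neighborSet v).ncard ≠ 2 := by
  constructor
  · rintro ⟨p, hp⟩
    exact hist_forward hxy p hp
  · rintro ⟨T, hle, hT, hdeg⟩
    exact hist_backward hxy T hle hT hdeg
end

section
/- Let G be a graph and suppose T is a HIST of a graph G' formed from G by attaching a pendant vertex z' to each z ∈ V(G) − {x,y}. Then every such pendant vertex z' is a leaf of T, its neighbor z has degree at least 3 in T, and T restricted to V(G) is a path between x and y. -/
private lemma walk_closed' {α : Type*} {G : SimpleGraph α} {S : Set α}
    (hS : ∀ v ∈ S, ∀ w, G.Adj v w → w ∈ S) :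
    ∀ {a b : α} (_p : G.Walk a b), a ∈ S → b ∈ S := by
  intro a b p
  induction p with
  | nil => exact id
  | cons h q ih => exact fun ha => ih (hS _ ha _ h)

private lemma exists_comap_walk' {α β : Type*} {T : SimpleGraph β} {f : α → β}
    (hf : Function.Injective f) :
    ∀ {a b : β} (p : T.Walk a b) {u v : α}, a = f u → b = f v →
      (∀ w ∈ p.support, ∃ c, w = f c) → Nonempty ((T.comap f).Walk u v) := by
  intro a b p
  induction p with
  | nil =>
    intro u v ha hb _
    obtain rfl := hf (ha.symm.trans hb)
    exact ⟨SimpleGraph.Walk.nil⟩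
  | @cons a c b h q ih =>
    intro u v ha hb hsup
    obtain ⟨d, hd⟩ := hsup c (by simp)
    obtain ⟨q'⟩ := ih hd hb (fun w hw => hsup w (by simp [hw]))
    refine ⟨SimpleGraph.Walk.cons ?_ q'⟩
    show T.Adj (f u) (f d)
    rw [← ha, ← hd]
    exact h

/-- If `T` is a HIST of the graph `G'` formed from `G` by attaching a pendant vertex `z'`
to each `z ∈ V(G) − {x,y}`, then every pendant vertex is a leaf of `T`, its neighbor has
degree at least 3 in `T`, and `T` restricted to `V(G)` is a (Hamiltonian) path between
`x` and `y`. -/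
theorem stmt_13 {V : Type*} [Fintype V] [DecidableEq V] (G : SimpleGraph V)
    (x y : V) (hxy : x ≠ y)
    (T : SimpleGraph (V ⊕ {z : V // z ≠ x ∧ z ≠ y}))
    (hle : T ≤ pendantExt G x y) (hTree : T.IsTree)
    (hHIST : ∀ v, (T.neighborSet v).ncard ≠ 2) :
    (∀ z : {z : V // z ≠ x ∧ z ≠ y},
        (T.neighborSet (Sum.inr z)).ncard = 1 ∧
        3 ≤ (T.neighborSet (Sum.inl z.1)).ncard) ∧
      ∃ p : (SimpleGraph.comap Sum.inl T).Walk x y, p.IsHamiltonian ∧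
        ∀ e, e ∈ (SimpleGraph.comap Sum.inl T).edgeSet ↔ e ∈ p.edges := by
  classical
  obtain ⟨hconn, hacyc⟩ := hTree
  -- any T-neighbor of a pendant vertex `inr z` is `inl z.1`
  have hpend : ∀ (a : V ⊕ {z : V // z ≠ x ∧ z ≠ y}) (z : {z : V // z ≠ x ∧ z ≠ y}),
      T.Adj a (Sum.inr z) → a = Sum.inl z.1 := by
    intro a z h
    have h' := hle h
    rw [pendantExt, SimpleGraph.fromRel_adj] at h'
    obtain ⟨hne, h' | h'⟩ := h'
    · cases a with
      | inl u => exact congrArg Sum.inl h'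
      | inr w => exact h'.elim
    · cases a with
      | inl u => exact h'.elim
      | inr w => exact h'.elim
  have hpend' : ∀ (z : {z : V // z ≠ x ∧ z ≠ y}) a, T.Adj (Sum.inr z) a → a = Sum.inl z.1 :=
    fun z a h => hpend a z h.symm
  -- the neighbor set of a pendant vertex is exactly `{inl z.1}`
  have hNinr : ∀ z : {z : V // z ≠ x ∧ z ≠ y},
      T.neighborSet (Sum.inr z) = {Sum.inl z.1} := by
    intro z
    have hsub : T.neighborSet (Sum.inr z) ⊆ {Sum.inl z.1} := fun a ha => hpend' z a ha
    have hne : (T.neighborSet (Sum.inr z)).Nonempty := by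
      obtain ⟨p⟩ := hconn.preconnected (Sum.inr z) (Sum.inl x)
      have hnil : ¬ p.Nil := SimpleGraph.Walk.not_nil_of_ne (by simp)
      obtain ⟨u, hadj, q, rfl⟩ := SimpleGraph.Walk.not_nil_iff.mp hnil
      exact ⟨u, hadj⟩
    exact hne.subset_singleton_iff.mp hsub
  have hadj_inr : ∀ z : {z : V // z ≠ x ∧ z ≠ y}, T.Adj (Sum.inr z) (Sum.inl z.1) := by
    intro z
    have : Sum.inl z.1 ∈ T.neighborSet (Sum.inr z) := by rw [hNinr z]; exact rfl
    exact this
  -- degree at least 3 for attachment vertices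
  have hdeg3 : ∀ z : {z : V // z ≠ x ∧ z ≠ y}, 3 ≤ (T.neighborSet (Sum.inl z.1)).ncard := by
    intro z
    have hmem : Sum.inr z ∈ T.neighborSet (Sum.inl z.1) := (hadj_inr z).symm
    have h0 : 0 < (T.neighborSet (Sum.inl z.1)).ncard :=
      (Set.ncard_pos (Set.toFinite _)).mpr ⟨_, hmem⟩
    have h1 : (T.neighborSet (Sum.inl z.1)).ncard ≠ 1 := by
      intro hc
      obtain ⟨a, ha⟩ := Set.ncard_eq_one.mp hc
      have haz : Sum.inr z = a := by rw [ha] at hmem; exact hmem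
      subst haz
      have hclosed : ∀ v ∈ ({Sum.inl z.1, Sum.inr z} :
          Set (V ⊕ {z : V // z ≠ x ∧ z ≠ y})), ∀ w, T.Adj v w →
          w ∈ ({Sum.inl z.1, Sum.inr z} : Set (V ⊕ {z : V // z ≠ x ∧ z ≠ y})) := by
        intro v hv w hw
        rcases hv with rfl | hv
        · have : w ∈ T.neighborSet (Sum.inl z.1) := hw
          rw [ha] at this
          exact Or.inr this
        · rw [Set.mem_singleton_iff] at hv
          subst hv
          have : w ∈ T.neighborSet (Sum.inr z) := hw
          rw [hNinr z] at this
          exact Or.inl this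
      obtain ⟨p⟩ := hconn.preconnected (Sum.inl z.1) (Sum.inl x)
      have hx' := walk_closed' hclosed p (Or.inl rfl)
      rcases hx' with h | h
      · rw [Sum.inl.injEq] at h
        exact z.2.1 h.symm
      · simp at h
    have h2 := hHIST (Sum.inl z.1)
    omega
  -- the restricted graph
  set T' : SimpleGraph V := SimpleGraph.comap Sum.inl T with hT'def
  have hinj : Function.Injective (Sum.inl : V → V ⊕ {z : V // z ≠ x ∧ z ≠ y}) :=
    Sum.inl_injective
  -- all T-neighbors of `inl x` (resp. `inl y`) are of the form `inl u`
  have hxy_inl : ∀ w : V, w = x ∨ w = y →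
      ∀ a ∈ T.neighborSet (Sum.inl w), ∃ u, a = Sum.inl u := by
    intro w hw a ha
    cases a with
    | inl u => exact ⟨u, rfl⟩
    | inr z =>
      exfalso
      have h := hpend _ z ha
      rw [Sum.inl.injEq] at h
      rcases hw with rfl | rfl
      · exact z.2.1 h.symm
      · exact z.2.2 h.symm
  -- image of restricted neighbor sets
  have himg : ∀ u : V, Sum.inl '' (T'.neighborSet u) =
      T.neighborSet (Sum.inl u) ∩ Set.range Sum.inl := by
    intro u
    ext w
    constructor
    · rintro ⟨v, hv, rfl⟩
      exact ⟨hv, v, rfl⟩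
    · rintro ⟨hw, v, rfl⟩
      exact ⟨v, hw, rfl⟩
  have hncx : ∀ w : V, w = x ∨ w = y →
      (T'.neighborSet w).ncard = (T.neighborSet (Sum.inl w)).ncard := by
    intro w hw
    rw [← Set.ncard_image_of_injective _ hinj, himg,
      Set.inter_eq_self_of_subset_left (fun a ha => by
        obtain ⟨u, hu⟩ := hxy_inl w hw a ha; exact ⟨u, hu.symm⟩)]
  -- decomposition of neighbor sets of interior vertices
  have hncz : ∀ (z : V) (hz1 : z ≠ x) (hz2 : z ≠ y),
      (T.neighborSet (Sum.inl z)).ncard = (T'.neighborSet z).ncard + 1 := by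
    intro z hz1 hz2
    have hdecomp : T.neighborSet (Sum.inl z) =
        insert (Sum.inr ⟨z, hz1, hz2⟩)
          (T.neighborSet (Sum.inl z) ∩ Set.range Sum.inl) := by
      ext w
      constructor
      · intro hw
        cases w with
        | inl u => exact Set.mem_insert_of_mem _ ⟨hw, u, rfl⟩
        | inr t =>
          have h := hpend _ t hw
          rw [Sum.inl.injEq] at h
          have : t = ⟨z, hz1, hz2⟩ := Subtype.ext h.symm
          rw [this]
          exact Set.mem_insert _ _
      · intro hw
        rcases hw with rfl | ⟨hw, _⟩
        · exact (hadj_inr ⟨z, hz1, hz2⟩).symm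
        · exact hw
    have hnot : Sum.inr ⟨z, hz1, hz2⟩ ∉
        T.neighborSet (Sum.inl z) ∩ Set.range Sum.inl := by
      rintro ⟨-, u, hu⟩
      exact Sum.inl_ne_inr hu
    rw [hdecomp, Set.ncard_insert_of_notMem hnot, ← himg,
      Set.ncard_image_of_injective _ hinj]
  -- every path in T between `inl` vertices stays in the `inl` part
  have hsupp_inl : ∀ (u v : V) (p : T.Walk (Sum.inl u) (Sum.inl v)), p.IsPath →
      ∀ w ∈ p.support, ∃ c, w = Sum.inl c := by
    intro u v p hp w hw
    cases w with
    | inl c => exact ⟨c, rfl⟩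
    | inr z =>
      exfalso
      have hq1nil : ¬ (p.takeUntil _ hw).reverse.Nil :=
        SimpleGraph.Walk.not_nil_of_ne (by simp)
      obtain ⟨a, ha, r1, hr1⟩ := SimpleGraph.Walk.not_nil_iff.mp hq1nil
      have haz : a = Sum.inl z.1 := hpend' z a ha
      have ha_mem : a ∈ (p.takeUntil _ hw).support := by
        have : a ∈ (p.takeUntil _ hw).reverse.support := by
          rw [hr1]; simp
        rwa [SimpleGraph.Walk.support_reverse, List.mem_reverse] at this
      have hq2nil : ¬ (p.dropUntil _ hw).Nil :=
        SimpleGraph.Walk.not_nil_of_ne (by simp)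
      obtain ⟨b, hb, r2, hr2⟩ := SimpleGraph.Walk.not_nil_iff.mp hq2nil
      have hbz : b = Sum.inl z.1 := hpend' z b hb
      have hb_mem : b ∈ (p.dropUntil _ hw).support.tail := by
        rw [hr2, SimpleGraph.Walk.support_cons, List.tail_cons]
        exact r2.start_mem_support
      have hnodup : ((p.takeUntil _ hw).support ++
          (p.dropUntil _ hw).support.tail).Nodup := by
        rw [← SimpleGraph.Walk.support_append, SimpleGraph.Walk.take_spec]
        exact hp.support_nodup
      exact (List.disjoint_of_nodup_append hnodup) (haz ▸ ha_mem) (hbz ▸ hb_mem)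
  -- T' is connected
  have hT'conn : T'.Connected := by
    rw [SimpleGraph.connected_iff]
    refine ⟨fun u v => ?_, ⟨x⟩⟩
    obtain ⟨p⟩ := hconn.preconnected (Sum.inl u) (Sum.inl v)
    obtain ⟨q⟩ := exists_comap_walk' hinj p.bypass rfl rfl
      (hsupp_inl u v p.bypass p.bypass_isPath)
    exact ⟨q⟩
  -- T' is acyclic
  have hT'acyc : T'.IsAcyclic := by
    intro v c hc
    have hmap : (c.map (⟨Sum.inl, fun h => h⟩ : T' →g T)).IsCycle :=
      (SimpleGraph.Walk.map_isCycle_iff_of_injective hinj).mpr hc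
    exact hacyc _ hmap
  have hT'tree : T'.IsTree := ⟨hT'conn, hT'acyc⟩
  -- counting degrees
  have hdeg_eq : ∀ u : V, (T'.neighborSet u).ncard = T'.degree u := by
    intro u
    rw [← SimpleGraph.card_neighborSet_eq_degree, Set.ncard_eq_toFinset_card',
      Set.toFinset_card]
  have hn2 : 2 ≤ Fintype.card V := Fintype.one_lt_card_iff_nontrivial.mpr ⟨⟨x, y, hxy⟩⟩
  have hsum : ∑ v : V, T'.degree v = 2 * (Fintype.card V - 1) := by
    rw [SimpleGraph.sum_degrees_eq_twice_card_edges]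
    have := hT'tree.card_edgeFinset
    omega
  -- every vertex of T' has positive degree
  have hdx_pos : ∀ w : V, 1 ≤ T'.degree w := by
    intro w
    rw [← hdeg_eq]
    refine Nat.one_le_iff_ne_zero.mpr (Nat.pos_iff_ne_zero.mp ((Set.ncard_pos (Set.toFinite _)).mpr ?_))
    obtain ⟨w', hw'⟩ : ∃ w' : V, w' ≠ w := by
      rcases eq_or_ne w x with rfl | h
      · exact ⟨y, (Ne.symm hxy)⟩
      · exact ⟨x, h.symm⟩
    obtain ⟨p⟩ := hT'conn.preconnected w w'
    have hnil : ¬ p.Nil := SimpleGraph.Walk.not_nil_of_ne hw'.symm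
    obtain ⟨u, hadj, q, rfl⟩ := SimpleGraph.Walk.not_nil_iff.mp hnil
    exact ⟨u, hadj⟩
  -- degree of x and y is not 2
  have hd2 : ∀ w : V, w = x ∨ w = y → T'.degree w ≠ 2 := by
    intro w hw
    rw [← hdeg_eq, hncx w hw]
    exact hHIST _
  -- interior degrees are at least 2
  have hdint : ∀ w : V, w ≠ x → w ≠ y → 2 ≤ T'.degree w := by
    intro w h1 h2
    have h3 : 3 ≤ (T.neighborSet (Sum.inl w)).ncard := hdeg3 ⟨w, h1, h2⟩
    have h4 := hncz w h1 h2
    rw [hdeg_eq] at h4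
    omega
  -- the counting argument
  set s : Finset V := (Finset.univ.erase x).erase y with hs_def
  have hy_mem : y ∈ Finset.univ.erase x := Finset.mem_erase.mpr ⟨Ne.symm hxy, Finset.mem_univ y⟩
  have hs_card : s.card = Fintype.card V - 2 := by
    rw [hs_def, Finset.card_erase_of_mem hy_mem, Finset.card_erase_of_mem (Finset.mem_univ x),
      Finset.card_univ]
    omega
  have hsplit : ∑ v : V, T'.degree v
      = T'.degree x + (T'.degree y + ∑ v ∈ s, T'.degree v) := by
    have e2 : T'.degree y + ∑ v ∈ s, T'.degree v
        = ∑ v ∈ Finset.univ.erase x, T'.degree v := by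
      rw [hs_def]
      exact Finset.add_sum_erase _ (fun v => T'.degree v) hy_mem
    rw [e2]
    exact (Finset.add_sum_erase _ (fun v => T'.degree v) (Finset.mem_univ x)).symm
  have hs_mem : ∀ v ∈ s, v ≠ x ∧ v ≠ y := by
    intro v hv
    rw [hs_def, Finset.mem_erase, Finset.mem_erase] at hv
    exact ⟨hv.2.1, hv.1⟩
  have hslow : 2 * s.card ≤ ∑ v ∈ s, T'.degree v := by
    calc 2 * s.card = ∑ _v ∈ s, 2 := by rw [Finset.sum_const, smul_eq_mul, mul_comm]
    _ ≤ ∑ v ∈ s, T'.degree v :=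
        Finset.sum_le_sum (fun v hv => hdint v (hs_mem v hv).1 (hs_mem v hv).2)
  have hdx1 : T'.degree x = 1 ∧ T'.degree y = 1 ∧
      ∑ v ∈ s, T'.degree v = ∑ _v ∈ s, 2 := by
    have h1 := hdx_pos x
    have h2 := hdx_pos y
    have h3 : ∑ _v ∈ s, 2 = 2 * s.card := by rw [Finset.sum_const, smul_eq_mul, mul_comm]
    rw [hsplit] at hsum
    omega
  have hall2 : ∀ v ∈ s, T'.degree v = 2 := by
    intro v hv
    exact ((Finset.sum_eq_sum_iff_of_le
      (fun i hi => hdint i (hs_mem i hi).1 (hs_mem i hi).2)).mp hdx1.2.2.symm v hv).symm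
  have hmemNF : ∀ u w : V, T'.Adj u w → w ∈ T'.neighborFinset u := by
    intro u w h
    rw [SimpleGraph.mem_neighborFinset]
    exact h
  -- construct the Hamiltonian path
  obtain ⟨p0⟩ := hT'conn.preconnected x y
  set p : T'.Walk x y := p0.bypass with hp_def
  have hp : p.IsPath := p0.bypass_isPath
  -- the support of p is closed under adjacency
  have hclosure : ∀ v ∈ p.support, ∀ w, T'.Adj v w → w ∈ p.support := by
    intro v hv w hw
    rcases eq_or_ne v x with rfl | hvx
    · -- v = x has degree 1
      have hnil : ¬ p.Nil := SimpleGraph.Walk.not_nil_of_ne hxy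
      obtain ⟨a, ha, r, hr⟩ := SimpleGraph.Walk.not_nil_iff.mp hnil
      have hcard : (T'.neighborFinset v).card ≤ 1 := by
        rw [SimpleGraph.card_neighborFinset_eq_degree, hdx1.1]
      have hwa : w = a := Finset.card_le_one.mp hcard _
        (hmemNF _ _ hw) _ (hmemNF _ _ ha)
      rw [hwa, hr]
      simp
    rcases eq_or_ne v y with rfl | hvy
    · -- v = y has degree 1
      have hnil : ¬ p.reverse.Nil := SimpleGraph.Walk.not_nil_of_ne (Ne.symm hxy)
      obtain ⟨a, ha, r, hr⟩ := SimpleGraph.Walk.not_nil_iff.mp hnil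
      have hcard : (T'.neighborFinset v).card ≤ 1 := by
        rw [SimpleGraph.card_neighborFinset_eq_degree, hdx1.2.1]
      have hwa : w = a := Finset.card_le_one.mp hcard _
        (hmemNF _ _ hw) _ (hmemNF _ _ ha)
      have : a ∈ p.reverse.support := by rw [hr]; simp
      rw [SimpleGraph.Walk.support_reverse, List.mem_reverse] at this
      rw [hwa]
      exact this
    · -- interior vertex, degree 2
      have hq1nil : ¬ (p.takeUntil _ hv).reverse.Nil :=
        SimpleGraph.Walk.not_nil_of_ne hvx
      obtain ⟨a, ha, r1, hr1⟩ := SimpleGraph.Walk.not_nil_iff.mp hq1nil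
      have ha_mem : a ∈ (p.takeUntil _ hv).support := by
        have : a ∈ (p.takeUntil _ hv).reverse.support := by rw [hr1]; simp
        rwa [SimpleGraph.Walk.support_reverse, List.mem_reverse] at this
      have hq2nil : ¬ (p.dropUntil _ hv).Nil :=
        SimpleGraph.Walk.not_nil_of_ne hvy
      obtain ⟨b, hb, r2, hr2⟩ := SimpleGraph.Walk.not_nil_iff.mp hq2nil
      have hb_mem : b ∈ (p.dropUntil _ hv).support.tail := by
        rw [hr2, SimpleGraph.Walk.support_cons, List.tail_cons]
        exact r2.start_mem_support
      have hnodup : ((p.takeUntil _ hv).support ++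
          (p.dropUntil _ hv).support.tail).Nodup := by
        rw [← SimpleGraph.Walk.support_append, SimpleGraph.Walk.take_spec]
        exact hp.support_nodup
      have hab : a ≠ b := by
        intro h
        exact (List.disjoint_of_nodup_append hnodup) ha_mem (h ▸ hb_mem)
      have hsubnf : ({a, b} : Finset V) ⊆ T'.neighborFinset v := by
        intro c hc
        rcases Finset.mem_insert.mp hc with rfl | hc
        · exact hmemNF _ _ ha
        · rw [Finset.mem_singleton] at hc
          subst hc
          exact hmemNF _ _ hb
      have hnf_eq : ({a, b} : Finset V) = T'.neighborFinset v := by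
        refine Finset.eq_of_subset_of_card_le hsubnf ?_
        have hvs : v ∈ s := by
          rw [hs_def]
          exact Finset.mem_erase.mpr ⟨hvy, Finset.mem_erase.mpr ⟨hvx, Finset.mem_univ v⟩⟩
        rw [SimpleGraph.card_neighborFinset_eq_degree, hall2 v hvs, Finset.card_pair hab]
      have hwmem : w ∈ ({a, b} : Finset V) := by
        rw [hnf_eq]
        exact hmemNF _ _ hw
      rcases Finset.mem_insert.mp hwmem with rfl | hwb
      · exact (p.support_takeUntil_subset hv) ha_mem
      · rw [Finset.mem_singleton] at hwb
        subst hwb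
        exact (p.support_dropUntil_subset hv) (List.mem_of_mem_tail hb_mem)
  -- p visits every vertex
  have hcover : ∀ u : V, u ∈ p.support := by
    intro u
    obtain ⟨q⟩ := hT'conn.preconnected x u
    exact walk_closed' (S := {w | w ∈ p.support}) hclosure q p.start_mem_support
  have hham : p.IsHamiltonian := hp.isHamiltonian_iff.mpr hcover
  -- edge sets coincide
  have hedge : ∀ e, e ∈ T'.edgeSet ↔ e ∈ p.edges := by
    have hcard_edges : p.edges.toFinset.card = Fintype.card V - 1 := by
      rw [List.toFinset_card_of_nodup hp.edges_nodup, SimpleGraph.Walk.length_edges,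
        hham.length_eq]
    have hsub : p.edges.toFinset ⊆ T'.edgeFinset := by
      intro e he
      rw [SimpleGraph.mem_edgeFinset]
      exact p.edges_subset_edgeSet (List.mem_toFinset.mp he)
    have heq : p.edges.toFinset = T'.edgeFinset :=
      Finset.eq_of_subset_of_card_le hsub
        (by rw [hcard_edges]; have := hT'tree.card_edgeFinset; omega)
    intro e
    constructor
    · intro he
      rw [← SimpleGraph.mem_edgeFinset, ← heq, List.mem_toFinset] at he
      exact he
    · exact fun he => p.edges_subset_edgeSet he
  refine ⟨fun z => ⟨?_, hdeg3 z⟩, p, hham, hedge⟩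
  rw [hNinr z]
  exact Set.ncard_singleton _
end

section
/- Let G be a connected bipartite graph with parts A, B, and let T be a HIST of G. Suppose every vertex of S(T) ∩ B has degree at least 3 in T, and |S(T) ∩ B| > (|A| − 1)/2. Then the forest T' induced on the edges of T incident to S(T) ∩ B satisfies |V(T') ∩ A| ≥ 2|S(T) ∩ B| + 1, and hence |A| ≥ 2|S(T) ∩ B| + 1, a contradiction; i.e., in any HIST T of a bipartite graph G(A,B), we have |S(T) ∩ B| ≤ (|A| − 1)/2 whenever the above degree condition holds. -/
/-- Let `G` be a connected bipartite graph with parts `A`, `B`, and let `T` be a HIST of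
`G` (a spanning tree with no vertex of degree 2).  If every vertex of `S(T) ∩ B` has
degree at least 3 in `T`, then `|S(T) ∩ B| ≤ (|A| − 1)/2`, i.e.
`2|S(T) ∩ B| + 1 ≤ |A|`, where `S(T)` is the set of non-leaves of `T`. -/
theorem stmt_18 {V : Type*} [Fintype V] (G T : SimpleGraph V) (A B : Set V)
    (hpart : ∀ v : V, v ∈ A ↔ v ∉ B)
    (hbip : ∀ u v : V, G.Adj u v → (u ∈ A ↔ v ∈ B))
    (hconn : G.Connected)
    (hTG : T ≤ G) (hTree : T.IsTree)
    (hHIST : ∀ v : V, (T.neighborSet v).ncard ≠ 2)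
    (hdeg : ∀ v ∈ {v : V | (T.neighborSet v).ncard ≠ 1} ∩ B,
      3 ≤ (T.neighborSet v).ncard) :
    2 * ({v : V | (T.neighborSet v).ncard ≠ 1} ∩ B).ncard + 1 ≤ A.ncard := by
  classical
  -- degree vs ncard
  have hnc : ∀ v : V, (T.neighborSet v).ncard = T.degree v := by
    intro v
    rw [Set.ncard_eq_toFinset_card', Set.toFinset_card, T.card_neighborSet_eq_degree]
  -- each T-edge has exactly one endpoint in B
  have hone : ∀ u v : V, T.Adj u v → (u ∈ B ↔ v ∉ B) := by
    intro u v huv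
    have h1 := hbip u v (hTG huv)
    have h2 := hpart u
    have h3 := hpart v
    tauto
  set S : Set V := {v : V | (T.neighborSet v).ncard ≠ 1} ∩ B with hS
  set Afin : Finset V := A.toFinset
  set Bfin : Finset V := B.toFinset
  set Sfin : Finset V := S.toFinset
  have hSB : Sfin ⊆ Bfin := by
    intro v hv
    simp only [Sfin, Bfin, Set.mem_toFinset] at *
    exact hv.2
  -- darts with fst in B
  set D : Finset (T.Dart) := Finset.univ.filter (fun d => d.fst ∈ B) with hD
  -- count D fiberwise over B
  have hD1 : D.card = ∑ v ∈ Bfin, T.degree v := by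
    rw [Finset.card_eq_sum_card_fiberwise (f := fun d : T.Dart => d.fst)
      (t := Bfin) (by intro d hd; simp only [D, Finset.mem_coe, Finset.mem_filter] at hd
                      simpa [Bfin, Set.mem_toFinset] using hd.2)]
    refine Finset.sum_congr rfl ?_
    intro v hv
    rw [← T.dart_fst_fiber_card_eq_degree v]
    congr 1
    ext d
    simp only [D, Finset.mem_filter, Finset.mem_univ, true_and]
    constructor
    · rintro ⟨_, h⟩; exact h
    · rintro rfl
      exact ⟨by simpa [Bfin, Set.mem_toFinset] using hv, rfl⟩
  -- bijection D ↔ edges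
  have hD2 : D.card = T.edgeFinset.card := by
    refine Finset.card_bij (fun d _ => d.edge) ?_ ?_ ?_
    · intro d hd
      simpa [SimpleGraph.mem_edgeFinset] using d.edge_mem
    · intro d1 h1 d2 h2 he
      rcases (SimpleGraph.dart_edge_eq_iff d1 d2).mp he with h | h
      · exact h
      · exfalso
        simp only [D, Finset.mem_filter] at h1 h2
        have : d1.fst = d2.snd := by rw [h]; rfl
        have hB2 : d2.snd ∈ B := this ▸ h1.2
        exact (hone d2.fst d2.snd d2.adj).mp h2.2 hB2
    · intro e he
      rw [SimpleGraph.mem_edgeFinset] at he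
      induction e with
      | h u v =>
        have hadj : T.Adj u v := he
        by_cases hu : u ∈ B
        · exact ⟨⟨(u, v), hadj⟩, by simp [D, hu], rfl⟩
        · have hv : v ∈ B := by
            have := hone u v hadj; tauto
          exact ⟨⟨(v, u), hadj.symm⟩, by simp [D, hv], Sym2.eq_swap⟩
  -- edge count of the tree
  have hE : T.edgeFinset.card + 1 = Fintype.card V := hTree.card_edgeFinset
  -- card V = |A| + |B|
  have hAB : Afin.card + Bfin.card = Fintype.card V := by
    rw [← Finset.card_union_of_disjoint, ← Finset.card_univ]
    · congr 1
      ext v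
      simp only [Finset.mem_union, Afin, Bfin, Set.mem_toFinset, Finset.mem_univ, iff_true]
      rcases (hpart v).symm.not with _
      by_cases h : v ∈ B
      · exact Or.inr h
      · exact Or.inl ((hpart v).mpr h)
    · rw [Finset.disjoint_left]
      intro v hvA hvB
      simp only [Afin, Bfin, Set.mem_toFinset] at hvA hvB
      exact (hpart v).mp hvA hvB
  -- lower bound on degree sum over B
  have hsum : 2 * Sfin.card + Bfin.card ≤ ∑ v ∈ Bfin, T.degree v := by
    have hsplit : ∑ v ∈ Bfin \ Sfin, T.degree v + ∑ v ∈ Sfin, T.degree v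
        = ∑ v ∈ Bfin, T.degree v := Finset.sum_sdiff hSB
    have h1 : 3 * Sfin.card ≤ ∑ v ∈ Sfin, T.degree v := by
      calc 3 * Sfin.card = ∑ _v ∈ Sfin, 3 := by simp [mul_comm]
        _ ≤ _ := Finset.sum_le_sum (fun v hv => by
            have := hdeg v (by simpa [Sfin, Set.mem_toFinset] using hv)
            rwa [hnc v] at this)
    have h2 : ∑ v ∈ Bfin \ Sfin, T.degree v = (Bfin \ Sfin).card := by
      rw [Finset.card_eq_sum_ones]
      refine Finset.sum_congr rfl ?_
      intro v hv
      simp only [Finset.mem_sdiff, Bfin, Sfin, Set.mem_toFinset] at hv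
      have hnot : ¬ ((T.neighborSet v).ncard ≠ 1) := by
        intro h
        exact hv.2 ⟨h, hv.1⟩
      rw [← hnc v]
      omega
    have hcard : Sfin.card + (Bfin \ Sfin).card = Bfin.card := by
      rw [Finset.card_sdiff_of_subset hSB]
      exact Nat.add_sub_cancel' (Finset.card_le_card hSB)
    omega
  have hScard : S.ncard = Sfin.card := Set.ncard_eq_toFinset_card' S
  have hAcard : A.ncard = Afin.card := Set.ncard_eq_toFinset_card' A
  rw [hScard, hAcard]
  omega
end
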